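/- arXiv:2101.02329 — 4 statements merged into one kernel-verified Lean document; each statement's English description precedes it below -/
import Mathlib

section
/- For any finite poset P, the rowmotion map row : A(P) → A(P), defined by row(A) = min{x ∈ P : x ≰ y for all y ∈ A}, sends antichains to antichains and is a bijection on the set of antichains of P. -/
open scoped Classical

variable {α : Type*}

noncomputable def toggle [PartialOrder α] (p : α) (A : Finset α) : Finset α :=
  if p ∈ A then A.erase p
  else if IsAntichain (· ≤ ·) (↑(insert p A) : Set α) then insert p A
  else A

noncomputable def rowmotion [Fintype α] [PartialOrder α] (A : Finset α) : Finset α :=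
  Finset.univ.filter
    (fun x => (∀ y ∈ A, ¬ x ≤ y) ∧ ∀ z : α, (∀ y ∈ A, ¬ z ≤ y) → z ≤ x → z = x)

noncomputable def rankToggle [Fintype α] [PartialOrder α] (rk : α → ℕ) (i : ℕ)
    (A : Finset α) : Finset α :=
  (Finset.univ.filter (fun p => rk p = i)).toList.foldr toggle A

noncomputable def rvac [Fintype α] [PartialOrder α] (rk : α → ℕ) (N : ℕ)
    (A : Finset α) : Finset α :=
  (List.range (N + 1)).foldl
    (fun B k => (List.range' k (N + 1 - k)).foldl (fun C j => rankToggle rk j C) B) A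

def IsRankFunction [PartialOrder α] (rk : α → ℕ) : Prop :=
  (∀ p : α, (∀ q : α, ¬ q < p) → rk p = 0) ∧ ∀ x y : α, x ⋖ y → rk y = rk x + 1

section RowAux
variable [Fintype α] [PartialOrder α]

lemma exists_minimal_le (p : α → Prop) {x : α} (hx : p x) :
    ∃ m, p m ∧ m ≤ x ∧ ∀ z, p z → z ≤ m → z = m := by
  classical
  obtain ⟨m, hm, hmin⟩ : ∃ m ∈ Finset.univ.filter (fun z => p z ∧ z ≤ x),
      ∀ z ∈ Finset.univ.filter (fun z => p z ∧ z ≤ x), ¬ z < m := by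
    obtain ⟨m, hm⟩ := Finset.exists_minimal
      (s := Finset.univ.filter (fun z => p z ∧ z ≤ x)) ⟨x, by simp [hx]⟩
    exact ⟨m, hm.1, fun z hz hlt => hlt.not_ge (hm.2 hz hlt.le)⟩
  simp only [Finset.mem_filter, Finset.mem_univ, true_and] at hm hmin
  exact ⟨m, hm.1, hm.2, fun z hz hzm => by
    by_contra h
    exact hmin z ⟨hz, hzm.trans hm.2⟩ (lt_of_le_of_ne hzm h)⟩

lemma exists_maximal_ge (p : α → Prop) {x : α} (hx : p x) :
    ∃ m, p m ∧ x ≤ m ∧ ∀ z, p z → m ≤ z → z = m := by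
  classical
  obtain ⟨m, hm, hmax⟩ : ∃ m ∈ Finset.univ.filter (fun z => p z ∧ x ≤ z),
      ∀ z ∈ Finset.univ.filter (fun z => p z ∧ x ≤ z), ¬ m < z := by
    obtain ⟨m, hm⟩ := Finset.exists_maximal
      (s := Finset.univ.filter (fun z => p z ∧ x ≤ z)) ⟨x, by simp [hx]⟩
    exact ⟨m, hm.1, fun z hz hlt => hlt.not_ge (hm.2 hz hlt.le)⟩
  simp only [Finset.mem_filter, Finset.mem_univ, true_and] at hm hmax
  exact ⟨m, hm.1, hm.2, fun z hz hmz => by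
    by_contra h
    exact hmax z ⟨hz, hm.2.trans hmz⟩ (lt_of_le_of_ne hmz (Ne.symm h))⟩

noncomputable def rowinv (B : Finset α) : Finset α :=
  Finset.univ.filter
    (fun x => (∀ b ∈ B, ¬ b ≤ x) ∧ ∀ z : α, (∀ b ∈ B, ¬ b ≤ z) → x ≤ z → z = x)

lemma not_le_rowmotion_iff {A : Finset α} {x : α} :
    (∀ b ∈ rowmotion A, ¬ b ≤ x) ↔ ∃ y ∈ A, x ≤ y := by
  constructor
  · intro h
    by_contra hc
    push_neg at hc
    obtain ⟨m, hm, hmx, hmin⟩ := exists_minimal_le (fun z => ∀ y ∈ A, ¬ z ≤ y)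
      (fun y hy hxy => hc y hy hxy)
    exact h m (by simp only [rowmotion, Finset.mem_filter, Finset.mem_univ, true_and]; exact ⟨hm, hmin⟩) hmx
  · rintro ⟨y, hy, hxy⟩ b hb hbx
    simp only [rowmotion, Finset.mem_filter] at hb
    exact hb.2.1 y hy (hbx.trans hxy)

lemma not_rowinv_le_iff {B : Finset α} {x : α} :
    (∀ a ∈ rowinv B, ¬ x ≤ a) ↔ ∃ b ∈ B, b ≤ x := by
  constructor
  · intro h
    by_contra hc
    push_neg at hc
    obtain ⟨m, hm, hxm, hmax⟩ := exists_maximal_ge (fun z => ∀ b ∈ B, ¬ b ≤ z)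
      (fun b hb hbx => hc b hb hbx)
    exact h m (by simp only [rowinv, Finset.mem_filter, Finset.mem_univ, true_and]; exact ⟨hm, hmax⟩) hxm
  · rintro ⟨b, hb, hbx⟩ a ha hxa
    simp only [rowinv, Finset.mem_filter] at ha
    exact ha.2.1 b hb (hbx.trans hxa)

lemma rowinv_rowmotion {A : Finset α} (hA : IsAntichain (· ≤ ·) (↑A : Set α)) :
    rowinv (rowmotion A) = A := by
  ext x
  simp only [rowinv, Finset.mem_filter, Finset.mem_univ, true_and]
  constructor
  · rintro ⟨h1, h2⟩
    obtain ⟨y, hy, hxy⟩ := not_le_rowmotion_iff.mp h1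
    have : y = x := h2 y (not_le_rowmotion_iff.mpr ⟨y, hy, le_refl y⟩) hxy
    rwa [← this]
  · intro hx
    refine ⟨not_le_rowmotion_iff.mpr ⟨x, hx, le_refl x⟩, fun z hz hxz => ?_⟩
    obtain ⟨y, hy, hzy⟩ := not_le_rowmotion_iff.mp hz
    have hxy : x ≤ y := hxz.trans hzy
    have : x = y := by
      by_contra h
      exact hA hx hy h hxy
    exact le_antisymm (this ▸ hzy) hxz

lemma rowmotion_rowinv {B : Finset α} (hB : IsAntichain (· ≤ ·) (↑B : Set α)) :
    rowmotion (rowinv B) = B := by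
  ext x
  simp only [rowmotion, Finset.mem_filter, Finset.mem_univ, true_and]
  constructor
  · rintro ⟨h1, h2⟩
    obtain ⟨b, hb, hbx⟩ := not_rowinv_le_iff.mp h1
    have : b = x := h2 b (not_rowinv_le_iff.mpr ⟨b, hb, le_refl b⟩) hbx
    rwa [← this]
  · intro hx
    refine ⟨not_rowinv_le_iff.mpr ⟨x, hx, le_refl x⟩, fun z hz hzx => ?_⟩
    obtain ⟨b, hb, hbz⟩ := not_rowinv_le_iff.mp hz
    have hbx : b ≤ x := hbz.trans hzx
    have : b = x := by
      by_contra h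
      exact hB hb hx h hbx
    exact le_antisymm hzx (this ▸ hbz)

lemma rowmotion_antichain (A : Finset α) :
    IsAntichain (· ≤ ·) (↑(rowmotion A) : Set α) := by
  intro x hx y hy hne hle
  simp only [rowmotion, Finset.coe_filter, Set.mem_setOf_eq] at hx hy
  exact hne (hy.2.2 x hx.2.1 hle)

lemma rowinv_antichain (B : Finset α) :
    IsAntichain (· ≤ ·) (↑(rowinv B) : Set α) := by
  intro x hx y hy hne hle
  simp only [rowinv, Finset.coe_filter, Set.mem_setOf_eq] at hx hy
  exact hne ((hx.2.2 y hy.2.1 hle).symm)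

end RowAux

theorem rowmotion_bijection [Fintype α] [PartialOrder α] :
    (∀ A : Finset α, IsAntichain (· ≤ ·) (↑A : Set α) →
      IsAntichain (· ≤ ·) (↑(rowmotion A) : Set α)) ∧
    Set.BijOn rowmotion {A : Finset α | IsAntichain (· ≤ ·) (↑A : Set α)}
      {A : Finset α | IsAntichain (· ≤ ·) (↑A : Set α)} := by
  refine ⟨fun A _ => rowmotion_antichain A, ?_⟩
  have hinv : Set.InvOn rowinv rowmotion
      {A : Finset α | IsAntichain (· ≤ ·) (↑A : Set α)}
      {A : Finset α | IsAntichain (· ≤ ·) (↑A : Set α)} :=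
    ⟨fun A hA => rowinv_rowmotion hA, fun B hB => rowmotion_rowinv hB⟩
  exact hinv.bijOn (fun A _ => rowmotion_antichain A) (fun B _ => rowinv_antichain B)
end

section
/- For any finite poset P and any linear extension p_1, p_2, …, p_n of P, rowmotion equals the composition of toggles τ_{p_n} ∘ τ_{p_{n-1}} ∘ ⋯ ∘ τ_{p_1}; that is, applying toggles at all elements in the order of a linear extension computes rowmotion on antichains. -/
open scoped Classical

variable {α : Type*}

private lemma mem_row_iff [Fintype α] [PartialOrder α] (A : Finset α) (x : α) :
    x ∈ rowmotion A ↔ (∀ y ∈ A, ¬ x ≤ y) ∧ ∀ z : α, (∀ y ∈ A, ¬ z ≤ y) → z ≤ x → z = x := by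
  simp [rowmotion]

private lemma row_antichain [Fintype α] [PartialOrder α] (A : Finset α) :
    IsAntichain (· ≤ ·) (↑(rowmotion A) : Set α) := by
  intro x hx y hy hxy hle
  rw [Finset.mem_coe, mem_row_iff] at hx hy
  exact hxy (hy.2 x hx.1 hle)

private lemma aux_fold [Fintype α] [PartialOrder α] (A : Finset α)
    (hA : IsAntichain (· ≤ ·) (↑A : Set α)) :
    ∀ (L : List α) (S : Finset α),
      (∀ a, a ∈ L ∨ a ∈ S) →
      (∀ a ∈ L, a ∉ S) →
      (∀ a ∈ L, ∀ s ∈ S, ¬ a < s) →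
      L.Nodup →
      L.Pairwise (fun a b => ¬ b < a) →
      L.foldl (fun B p => toggle p B) ((rowmotion A ∩ S) ∪ (A \ S)) = rowmotion A := by
  intro L
  induction L with
  | nil =>
    intro S h1 _ _ _ _
    simp only [List.foldl_nil]
    ext x
    have hx : x ∈ S := (h1 x).resolve_left (by simp)
    simp [Finset.mem_union, Finset.mem_inter, Finset.mem_sdiff, hx]
  | cons p rest ih =>
    intro S h1 h2 h3 hnd hpw
    set R := rowmotion A with hRdef
    have hpS : p ∉ S := h2 p List.mem_cons_self
    have hpw' := List.pairwise_cons.mp hpw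
    have hnd' := List.nodup_cons.mp hnd
    have hdown : ∀ q, q < p → q ∈ S := by
      intro q hq
      by_contra hqS
      rcases h1 q with hqL | hqS'
      · rcases List.mem_cons.mp hqL with rfl | hqr
        · exact lt_irrefl _ hq
        · exact hpw'.1 q hqr hq
      · exact hqS hqS'
    have hAR : ∀ x ∈ A, x ∉ R := by
      intro x hx hxR
      exact ((mem_row_iff A x).mp hxR).1 x hx le_rfl
    have hRanti := row_antichain A
    have hBanti : IsAntichain (· ≤ ·) (↑((R ∩ S) ∪ (A \ S)) : Set α) := by
      intro x hx y hy hxy hle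
      simp only [Finset.coe_union, Set.mem_union, Finset.mem_coe, Finset.mem_inter,
        Finset.mem_sdiff] at hx hy
      rcases hx with ⟨hxR, hxS⟩ | ⟨hxA, hxS⟩ <;> rcases hy with ⟨hyR, hyS⟩ | ⟨hyA, hyS⟩
      · exact hRanti hxR hyR hxy hle
      · exact ((mem_row_iff A x).mp hxR).1 y hyA hle
      · have hxL : x ∈ p :: rest := (h1 x).resolve_right hxS
        exact h3 x hxL y hyS (lt_of_le_of_ne hle hxy)
      · exact hA hxA hyA hxy hle
    have key : toggle p ((R ∩ S) ∪ (A \ S)) = (R ∩ insert p S) ∪ (A \ insert p S) := by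
      by_cases hpA : p ∈ A
      · have hpR : p ∉ R := hAR p hpA
        have hpB : p ∈ (R ∩ S) ∪ (A \ S) := by simp [hpA, hpS]
        rw [toggle, if_pos hpB]
        ext x
        simp only [Finset.mem_erase, Finset.mem_union, Finset.mem_inter, Finset.mem_sdiff,
          Finset.mem_insert, not_or]
        constructor
        · rintro ⟨hxp, (⟨h, h'⟩ | ⟨h, h'⟩)⟩
          · exact Or.inl ⟨h, Or.inr h'⟩
          · exact Or.inr ⟨h, hxp, h'⟩
        · rintro (⟨h, (rfl | h')⟩ | ⟨h, h', h''⟩)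
          · exact absurd h hpR
          · exact ⟨fun hc => hpS (hc ▸ h'), Or.inl ⟨h, h'⟩⟩
          · exact ⟨h', Or.inr ⟨h, h''⟩⟩
      · by_cases hpR : p ∈ R
        · have hpB : p ∉ (R ∩ S) ∪ (A \ S) := by simp [hpA, hpS]
          have hanti : IsAntichain (· ≤ ·)
              (↑(insert p ((R ∩ S) ∪ (A \ S))) : Set α) := by
            rw [Finset.coe_insert]
            refine hBanti.insert ?_ ?_
            · intro b hb hne hle
              simp only [Finset.coe_union, Set.mem_union, Finset.mem_coe, Finset.mem_inter,
                Finset.mem_sdiff] at hb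
              rcases hb with ⟨hbR, hbS⟩ | ⟨hbA, hbS⟩
              · exact hRanti hbR hpR (fun h => hne h.symm) hle
              · exact hbS (hdown b (lt_of_le_of_ne hle (fun h => hne h.symm)))
            · intro b hb hne hle
              simp only [Finset.coe_union, Set.mem_union, Finset.mem_coe, Finset.mem_inter,
                Finset.mem_sdiff] at hb
              rcases hb with ⟨hbR, hbS⟩ | ⟨hbA, hbS⟩
              · exact hRanti hpR hbR hne hle
              · exact ((mem_row_iff A p).mp hpR).1 b hbA hle
          rw [toggle, if_neg hpB, if_pos hanti]
          ext x
          simp only [Finset.mem_insert, Finset.mem_union, Finset.mem_inter, Finset.mem_sdiff,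
            not_or]
          constructor
          · rintro (rfl | (⟨h, h'⟩ | ⟨h, h'⟩))
            · exact Or.inl ⟨hpR, Or.inl rfl⟩
            · exact Or.inl ⟨h, Or.inr h'⟩
            · exact Or.inr ⟨h, fun hc => hpA (hc ▸ h), h'⟩
          · rintro (⟨h, (rfl | h')⟩ | ⟨h, _, h''⟩)
            · exact Or.inl rfl
            · exact Or.inr (Or.inl ⟨h, h'⟩)
            · exact Or.inr (Or.inr ⟨h, h''⟩)
        · have hpB : p ∉ (R ∩ S) ∪ (A \ S) := by simp [hpA, hpR]
          have hnot : ¬ IsAntichain (· ≤ ·)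
              (↑(insert p ((R ∩ S) ∪ (A \ S))) : Set α) := by
            intro hanti
            rw [mem_row_iff, not_and_or] at hpR
            rcases hpR with h | h
            · push_neg at h
              obtain ⟨y, hyA, hy⟩ := h
              have hpy : p ≠ y := fun hc => hpA (hc ▸ hyA)
              have hyS : y ∉ S := by
                intro hyS
                exact h3 p List.mem_cons_self y hyS (lt_of_le_of_ne hy hpy)
              have hyB : y ∈ insert p ((R ∩ S) ∪ (A \ S)) := by
                simp [hyA, hyS]
              exact hanti (by simp : p ∈ (↑(insert p ((R ∩ S) ∪ (A \ S))) : Set α))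
                (Finset.mem_coe.mpr hyB) hpy hy
            · push_neg at h
              obtain ⟨z, hz, hzp, hzne⟩ := h
              have hne : (Finset.univ.filter
                  (fun x => (∀ y ∈ A, ¬ x ≤ y) ∧ x ≤ z)).Nonempty :=
                ⟨z, Finset.mem_filter.mpr ⟨Finset.mem_univ z, hz, le_rfl⟩⟩
              obtain ⟨m, hm, hmmin⟩ : ∃ m ∈ Finset.univ.filter (fun x => (∀ y ∈ A, ¬ x ≤ y) ∧ x ≤ z), ∀ w ∈ Finset.univ.filter (fun x => (∀ y ∈ A, ¬ x ≤ y) ∧ x ≤ z), ¬ w < m := by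
                obtain ⟨m, hmM⟩ := (↑(Finset.univ.filter (fun x => (∀ y ∈ A, ¬ x ≤ y) ∧ x ≤ z)) : Set α).toFinite.exists_minimal (Finset.coe_nonempty.2 hne)
                exact ⟨m, hmM.1, fun w hw hlt => lt_irrefl _ (lt_of_lt_of_le hlt (hmM.2 hw hlt.le))⟩
              simp only [Finset.mem_filter, Finset.mem_univ, true_and] at hm
              have hmR : m ∈ R := by
                rw [mem_row_iff]
                refine ⟨hm.1, ?_⟩
                intro w hw hwm
                by_contra hwne
                exact hmmin w (Finset.mem_filter.mpr ⟨Finset.mem_univ w, hw, le_trans hwm hm.2⟩) (lt_of_le_of_ne hwm hwne)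
              have hmp : m < p := lt_of_le_of_lt hm.2 (lt_of_le_of_ne hzp hzne)
              have hmS : m ∈ S := hdown m hmp
              have hmB : m ∈ insert p ((R ∩ S) ∪ (A \ S)) := by
                simp [hmR, hmS]
              exact hanti (Finset.mem_coe.mpr hmB)
                (by simp : p ∈ (↑(insert p ((R ∩ S) ∪ (A \ S))) : Set α))
                (ne_of_lt hmp) (le_of_lt hmp)
          rw [toggle, if_neg hpB, if_neg hnot]
          ext x
          simp only [Finset.mem_union, Finset.mem_inter, Finset.mem_sdiff, Finset.mem_insert,
            not_or]
          constructor
          · rintro (⟨h, h'⟩ | ⟨h, h'⟩)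
            · exact Or.inl ⟨h, Or.inr h'⟩
            · exact Or.inr ⟨h, fun hc => hpA (hc ▸ h), h'⟩
          · rintro (⟨h, (rfl | h')⟩ | ⟨h, _, h''⟩)
            · exact absurd h hpR
            · exact Or.inl ⟨h, h'⟩
            · exact Or.inr ⟨h, h''⟩
    rw [List.foldl_cons]
    rw [show toggle p ((R ∩ S) ∪ (A \ S)) = (R ∩ insert p S) ∪ (A \ insert p S) from key]
    refine ih (insert p S) ?_ ?_ ?_ hnd'.2 hpw'.2
    · intro a
      rcases h1 a with haL | haS
      · rcases List.mem_cons.mp haL with rfl | har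
        · exact Or.inr (Finset.mem_insert_self _ _)
        · exact Or.inl har
      · exact Or.inr (Finset.mem_insert_of_mem haS)
    · intro a ha
      simp only [Finset.mem_insert, not_or]
      exact ⟨fun hc => hnd'.1 (hc ▸ ha), h2 a (List.mem_cons_of_mem p ha)⟩
    · intro a ha s hs
      rcases Finset.mem_insert.mp hs with rfl | hsS
      · exact hpw'.1 a ha
      · exact h3 a (List.mem_cons_of_mem p ha) s hsS

theorem rowmotion_eq_toggles [Fintype α] [PartialOrder α] (L : List α)
    (hmem : ∀ a : α, a ∈ L) (hnodup : L.Nodup)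
    (hext : L.Pairwise (fun a b => ¬ b < a))
    (A : Finset α) (hA : IsAntichain (· ≤ ·) (↑A : Set α)) :
    rowmotion A = L.foldl (fun B p => toggle p B) A := by
  have := aux_fold A hA L ∅ (fun a => Or.inl (hmem a)) (by simp) (by simp) hnodup hext
  simpa using this.symm
end

section
/- For any finite ranked poset P, the rowvacuation operator Rvac is an involution on the set of antichains of P. -/
open scoped Classical

variable {α : Type*}

namespace RvacAux

/-! ### Abstract word algebra for evacuation -/

section Words

variable {S : Type*} (f : ℕ → S → S)

def act (w : List ℕ) (s : S) : S := w.foldl (fun t j => f j t) s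

@[simp] lemma act_nil (s : S) : act f [] s = s := rfl

@[simp] lemma act_cons (j : ℕ) (w : List ℕ) (s : S) :
    act f (j :: w) s = act f w (f j s) := rfl

lemma act_append (w₁ w₂ : List ℕ) (s : S) :
    act f (w₁ ++ w₂) s = act f w₂ (act f w₁ s) :=
  List.foldl_append

variable (hinv : ∀ j s, f j (f j s) = s)
  (hcomm : ∀ i j, i + 2 ≤ j → ∀ s, f i (f j s) = f j (f i s))

include hinv in
lemma act_rev_cancel : ∀ (w : List ℕ) (s : S), act f (w.reverse ++ w) s = s := by
  intro w
  induction w with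
  | nil => intro s; rfl
  | cons j t ih =>
    intro s
    have h1 : (j :: t).reverse ++ j :: t = t.reverse ++ (j :: j :: t) := by simp
    rw [h1, act_append, act_cons, act_cons, hinv]
    have h2 := ih s
    rwa [act_append] at h2

include hinv in
lemma act_cancel_rev (w : List ℕ) (s : S) : act f (w ++ w.reverse) s = s := by
  have := act_rev_cancel f hinv w.reverse s
  rwa [List.reverse_reverse] at this

include hinv in
lemma act_rev_after (w : List ℕ) (s : S) : act f w.reverse (act f w s) = s := by
  have := act_cancel_rev f hinv w s
  rwa [act_append] at this

include hinv in
lemma act_after_rev (w : List ℕ) (s : S) : act f w (act f w.reverse s) = s := by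
  have := act_rev_cancel f hinv w s
  rwa [act_append] at this

include hcomm in
lemma act_comm_letter (a : ℕ) :
    ∀ (w : List ℕ), (∀ j ∈ w, a + 2 ≤ j) → ∀ s : S,
      act f (a :: w) s = act f (w ++ [a]) s := by
  intro w
  induction w with
  | nil => intro _ s; rfl
  | cons j t ih =>
    intro hw s
    have hj : a + 2 ≤ j := hw j (by simp)
    calc act f (a :: j :: t) s = act f t (f j (f a s)) := rfl
      _ = act f t (f a (f j s)) := by rw [hcomm a j hj]
      _ = act f (a :: t) (f j s) := rfl
      _ = act f (t ++ [a]) (f j s) := ih (fun x hx => hw x (by simp [hx])) _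
      _ = act f ((j :: t) ++ [a]) s := rfl

end Words

/-! ### Evacuation words -/

def asc (N a : ℕ) : List ℕ := List.range' a (N + 1 - a)

def desc (N a : ℕ) : List ℕ := (asc N a).reverse

def evac (N a : ℕ) : List ℕ := (List.range' a (N + 1 - a)).flatMap (desc N)

lemma asc_eq_cons {N a : ℕ} (h : a ≤ N) : asc N a = a :: asc N (a + 1) := by
  unfold asc
  have h1 : N + 1 - a = (N - a) + 1 := by omega
  have h2 : N + 1 - (a + 1) = N - a := by omega
  rw [h1, h2, List.range'_succ]

lemma desc_eq_concat {N a : ℕ} (h : a ≤ N) : desc N a = desc N (a + 1) ++ [a] := by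
  unfold desc
  rw [asc_eq_cons h, List.reverse_cons]

lemma asc_top (N : ℕ) : asc N (N + 1) = [] := by
  unfold asc; simp

lemma desc_top (N : ℕ) : desc N (N + 1) = [] := by
  unfold desc; rw [asc_top]; rfl

lemma evac_top (N : ℕ) : evac N (N + 1) = [] := by
  unfold evac; simp

lemma evac_eq_append {N a : ℕ} (h : a ≤ N) :
    evac N a = desc N a ++ evac N (a + 1) := by
  unfold evac
  have h1 : N + 1 - a = (N - a) + 1 := by omega
  have h2 : N + 1 - (a + 1) = N - a := by omega
  rw [h1, h2, List.range'_succ, List.flatMap_cons]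

lemma mem_asc {N a j : ℕ} (hj : j ∈ asc N a) : a ≤ j ∧ j ≤ N := by
  unfold asc at hj
  rw [List.mem_range'_1] at hj
  omega

lemma mem_desc {N a j : ℕ} (hj : j ∈ desc N a) : a ≤ j ∧ j ≤ N := by
  unfold desc at hj
  rw [List.mem_reverse] at hj
  exact mem_asc hj

lemma mem_evac {N a j : ℕ} (hj : j ∈ evac N a) : a ≤ j ∧ j ≤ N := by
  unfold evac at hj
  rw [List.mem_flatMap] at hj
  obtain ⟨k, hk, hjk⟩ := hj
  rw [List.mem_range'_1] at hk
  have := mem_desc hjk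
  omega

section EvacAlg

variable {S : Type*} (f : ℕ → S → S)
  (hinv : ∀ j s, f j (f j s) = s)
  (hcomm : ∀ i j, i + 2 ≤ j → ∀ s, f i (f j s) = f j (f i s))

include hinv hcomm in
lemma act_kprime (N : ℕ) :
    ∀ (d a : ℕ), a + d = N → ∀ s : S,
      act f (evac N (a + 1) ++ desc N a) s = act f (asc N a ++ evac N (a + 1)) s := by
  intro d
  induction d with
  | zero =>
    intro a ha s
    obtain rfl : a = N := by omega
    rw [evac_top, desc_eq_concat le_rfl, desc_top, asc_eq_cons le_rfl, asc_top]
    rfl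
  | succ d ih =>
    intro a ha s
    have haN : a + 1 ≤ N := by omega
    have haN' : a ≤ N := by omega
    have hmem : ∀ j ∈ evac N (a + 2), a + 2 ≤ j := fun j hj => (mem_evac hj).1
    have hdesc1 : desc N (a + 1) = (asc N (a + 1)).reverse := rfl
    have hdesc0 : desc N a = (asc N a).reverse := rfl
    calc act f (evac N (a + 1) ++ desc N a) s
        = act f [a] (act f (evac N (a + 2) ++ desc N (a + 1))
            (act f (desc N (a + 1)) s)) := by
          rw [evac_eq_append haN, desc_eq_concat haN']
          simp only [act_append]
      _ = act f [a] (act f (asc N (a + 1) ++ evac N (a + 2))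
            (act f (desc N (a + 1)) s)) := by rw [ih (a + 1) (by omega)]
      _ = act f [a] (act f (evac N (a + 2))
            (act f (asc N (a + 1)) (act f (desc N (a + 1)) s))) := by
          simp only [act_append]
      _ = act f [a] (act f (evac N (a + 2)) s) := by
          rw [hdesc1, act_after_rev f hinv]
      _ = act f (evac N (a + 2) ++ [a]) s := by rw [act_append]
      _ = act f (a :: evac N (a + 2)) s := (act_comm_letter f hcomm a _ hmem s).symm
      _ = act f (evac N (a + 2)) (f a s) := by rw [act_cons]
      _ = act f (evac N (a + 2))
            (act f (desc N (a + 1)) (act f (asc N (a + 1)) (f a s))) := by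
          rw [hdesc1, act_rev_after f hinv]
      _ = act f (asc N a ++ evac N (a + 1)) s := by
          rw [evac_eq_append haN, asc_eq_cons haN']
          simp only [act_append, act_cons]

include hinv hcomm in
lemma act_evac_invol (N : ℕ) :
    ∀ (d a : ℕ), a + d = N + 1 → ∀ s : S,
      act f (evac N a ++ evac N a) s = s := by
  intro d
  induction d with
  | zero =>
    intro a ha s
    obtain rfl : a = N + 1 := by omega
    rw [evac_top]
    rfl
  | succ d ih =>
    intro a ha s
    have haN : a ≤ N := by omega
    calc act f (evac N a ++ evac N a) s
        = act f (evac N (a + 1)) (act f (evac N (a + 1) ++ desc N a)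
            (act f (desc N a) s)) := by
          rw [evac_eq_append haN]
          simp only [act_append]
      _ = act f (evac N (a + 1)) (act f (asc N a ++ evac N (a + 1))
            (act f (desc N a) s)) := by
          rw [act_kprime f hinv hcomm N (N - a) a (by omega)]
      _ = act f (evac N (a + 1)) (act f (evac N (a + 1))
            (act f (asc N a) (act f (desc N a) s))) := by
          simp only [act_append]
      _ = act f (evac N (a + 1)) (act f (evac N (a + 1)) s) := by
          rw [show desc N a = (asc N a).reverse from rfl, act_after_rev f hinv]
      _ = act f (evac N (a + 1) ++ evac N (a + 1)) s := by rw [act_append]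
      _ = s := ih (a + 1) (by omega) s

end EvacAlg


/-! ### Rank function lemmas -/

section RankLemmas

variable [Fintype α] [PartialOrder α] {rk : α → ℕ}

lemma rk_lt_of_lt (hcov : ∀ x y : α, x ⋖ y → rk y = rk x + 1) :
    ∀ y x : α, x < y → rk x < rk y := by
  intro y
  refine wellFounded_lt.induction
    (C := fun y => ∀ x, x < y → rk x < rk y) y ?_
  intro b IH x hxb
  obtain ⟨z, hxz, hzb⟩ := hxb.exists_le_covby
  have hz := hcov z b hzb
  rcases eq_or_lt_of_le hxz with rfl | hlt
  · omega
  · have h1 : rk x < rk z := IH z hzb.lt x hlt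
    omega

lemma rk_incomp (hcov : ∀ x y : α, x ⋖ y → rk y = rk x + 1)
    {x y : α} (h : rk x = rk y) (hne : x ≠ y) : ¬ x ≤ y := by
  intro hle
  have := rk_lt_of_lt hcov y x (lt_of_le_of_ne hle hne)
  omega

lemma rk_le_of_le (hcov : ∀ x y : α, x ⋖ y → rk y = rk x + 1)
    {x y : α} (h : x ≤ y) : rk x ≤ rk y := by
  rcases eq_or_lt_of_le h with rfl | hlt
  · exact le_rfl
  · exact (rk_lt_of_lt hcov y x hlt).le

end RankLemmas
/-! ### Antichain toggles -/

section Toggles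

variable [Fintype α] [PartialOrder α]

lemma toggle_isAntichain {A : Finset α} (hA : IsAntichain (· ≤ ·) (↑A : Set α)) (p : α) :
    IsAntichain (· ≤ ·) (↑(toggle p A) : Set α) := by
  unfold toggle
  split_ifs with h1 h2
  · exact hA.subset (Finset.coe_subset.2 (Finset.erase_subset _ _))
  · exact h2
  · exact hA

lemma foldr_toggle_isAntichain {A : Finset α} (hA : IsAntichain (· ≤ ·) (↑A : Set α)) :
    ∀ L : List α, IsAntichain (· ≤ ·) (↑(L.foldr toggle A) : Set α)
  | [] => hA
  | p :: t => toggle_isAntichain (foldr_toggle_isAntichain hA t) p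

lemma isAntichain_insert_iff {A : Finset α} (hA : IsAntichain (· ≤ ·) (↑A : Set α))
    {p : α} (hp : p ∉ A) :
    IsAntichain (· ≤ ·) (↑(insert p A) : Set α) ↔ ∀ b ∈ A, ¬ p ≤ b ∧ ¬ b ≤ p := by
  rw [Finset.coe_insert, isAntichain_insert]
  constructor
  · rintro ⟨-, h⟩ b hb
    have hne : p ≠ b := fun he => hp (he ▸ hb)
    exact h (Finset.mem_coe.2 hb) hne
  · intro h
    exact ⟨hA, fun b hb _ => h b (Finset.mem_coe.1 hb)⟩

lemma foldr_toggle_mem {A : Finset α} (hA : IsAntichain (· ≤ ·) (↑A : Set α)) :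
    ∀ L : List α, L.Nodup → (∀ a ∈ L, ∀ b ∈ L, a ≠ b → ¬ a ≤ b) →
    ∀ x, (x ∈ L.foldr toggle A ↔
      ((x ∈ L ∧ x ∉ A ∧ ∀ b ∈ A, b ∉ L → ¬ x ≤ b ∧ ¬ b ≤ x) ∨ (x ∉ L ∧ x ∈ A))) := by
  intro L
  induction L with
  | nil => intro _ _ x; simp
  | cons p t ih =>
    intro hnd hinc x
    have hndt : t.Nodup := (List.nodup_cons.1 hnd).2
    have hpt : p ∉ t := (List.nodup_cons.1 hnd).1
    have hinct : ∀ a ∈ t, ∀ b ∈ t, a ≠ b → ¬ a ≤ b :=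
      fun a ha b hb => hinc a (List.mem_cons_of_mem _ ha) b (List.mem_cons_of_mem _ hb)
    have hS := foldr_toggle_isAntichain hA t
    have hmS := ih hndt hinct
    set S := t.foldr toggle A with hSdef
    have hpS : p ∈ S ↔ p ∈ A := by
      rw [hmS p]
      simp [hpt]
    show x ∈ toggle p S ↔ _
    by_cases hpA : p ∈ A
    · -- p gets erased
      have hpS' : p ∈ S := hpS.2 hpA
      have htog : toggle p S = S.erase p := by unfold toggle; rw [if_pos hpS']
      rw [htog, Finset.mem_erase, hmS x]
      by_cases hxp : x = p
      · subst hxp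
        simp [hpA, List.mem_cons]
      · constructor
        · rintro ⟨hne, h⟩
          rcases h with ⟨hxt, hxA, hC⟩ | ⟨hxt, hxA⟩
          · exact Or.inl ⟨List.mem_cons_of_mem _ hxt, hxA,
              fun b hb hbpt => hC b hb (fun hbt => hbpt (List.mem_cons_of_mem _ hbt))⟩
          · refine Or.inr ⟨?_, hxA⟩
            simp [List.mem_cons, hxp, hxt]
        · rintro (⟨hxpt, hxA, hC⟩ | ⟨hxpt, hxA⟩)
          · have hxt : x ∈ t := by
              rcases List.mem_cons.1 hxpt with h | h
              · exact absurd h hxp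
              · exact h
            refine ⟨hxp, Or.inl ⟨hxt, hxA, fun b hb hbt => ?_⟩⟩
            by_cases hbp : b = p
            · subst hbp
              exact ⟨hinc x (List.mem_cons_of_mem _ hxt) b (List.mem_cons_self) hxp,
                hinc b (List.mem_cons_self) x (List.mem_cons_of_mem _ hxt)
                  (fun h => hxp h.symm)⟩
            · exact hC b hb (by simp [List.mem_cons, hbp, hbt])
          · exact ⟨hxp, Or.inr ⟨fun h => hxpt (List.mem_cons_of_mem _ h), hxA⟩⟩
    · -- p not in A
      have hpS' : p ∉ S := fun h => hpA (hpS.1 h)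
      have hQiff : IsAntichain (· ≤ ·) (↑(insert p S) : Set α) ↔
          (∀ b ∈ A, b ∉ p :: t → ¬ p ≤ b ∧ ¬ b ≤ p) := by
        rw [isAntichain_insert_iff hS hpS']
        constructor
        · intro h b hb hbpt
          exact h b ((hmS b).2 (Or.inr ⟨fun hbt => hbpt (List.mem_cons_of_mem _ hbt), hb⟩))
        · intro h b hb
          rcases (hmS b).1 hb with ⟨hbt, hbA, _⟩ | ⟨hbt, hbA⟩
          · have hbp : p ≠ b := fun he => hpt (he ▸ hbt)
            exact ⟨hinc p (List.mem_cons_self) b (List.mem_cons_of_mem _ hbt) hbp,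
              hinc b (List.mem_cons_of_mem _ hbt) p (List.mem_cons_self) hbp.symm⟩
          · have hbp : b ∉ (p :: t : List α) := by
              simp only [List.mem_cons]
              rintro (rfl | h)
              · exact hpA hbA
              · exact hbt h
            exact h b hbA hbp
      have hCeq : ∀ y, ((∀ b ∈ A, b ∉ t → ¬ y ≤ b ∧ ¬ b ≤ y) ↔
          (∀ b ∈ A, b ∉ p :: t → ¬ y ≤ b ∧ ¬ b ≤ y)) := by
        intro y
        constructor
        · intro h b hb hbpt
          exact h b hb (fun hbt => hbpt (List.mem_cons_of_mem _ hbt))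
        · intro h b hb hbt
          refine h b hb ?_
          simp only [List.mem_cons]
          rintro (rfl | hh)
          · exact hpA hb
          · exact hbt hh
      by_cases hQ : IsAntichain (· ≤ ·) (↑(insert p S) : Set α)
      · have htog : toggle p S = insert p S := by
          unfold toggle; rw [if_neg hpS', if_pos hQ]
        rw [htog, Finset.mem_insert]
        by_cases hxp : x = p
        · subst hxp
          constructor
          · intro _
            exact Or.inl ⟨List.mem_cons_self, hpA, hQiff.1 hQ⟩
          · intro _
            exact Or.inl rfl
        · rw [hmS x]
          constructor
          · rintro (h | h)
            · exact absurd h hxp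
            · rcases h with ⟨hxt, hxA, hC⟩ | ⟨hxt, hxA⟩
              · exact Or.inl ⟨List.mem_cons_of_mem _ hxt, hxA, (hCeq x).1 hC⟩
              · exact Or.inr ⟨by simp [List.mem_cons, hxp, hxt], hxA⟩
          · rintro (⟨hxpt, hxA, hC⟩ | ⟨hxpt, hxA⟩)
            · have hxt : x ∈ t := by
                rcases List.mem_cons.1 hxpt with h | h
                · exact absurd h hxp
                · exact h
              exact Or.inr (Or.inl ⟨hxt, hxA, (hCeq x).2 hC⟩)
            · exact Or.inr (Or.inr ⟨fun h => hxpt (List.mem_cons_of_mem _ h), hxA⟩)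
      · have htog : toggle p S = S := by
          unfold toggle; rw [if_neg hpS', if_neg hQ]
        rw [htog, hmS x]
        by_cases hxp : x = p
        · subst hxp
          constructor
          · rintro (⟨h, -, -⟩ | ⟨-, h⟩)
            · exact absurd h hpt
            · exact absurd h hpA
          · rintro (⟨-, -, hC⟩ | ⟨h, -⟩)
            · exact absurd (hQiff.2 hC) hQ
            · exact absurd (List.mem_cons_self) h
        · constructor
          · rintro (⟨hxt, hxA, hC⟩ | ⟨hxt, hxA⟩)
            · exact Or.inl ⟨List.mem_cons_of_mem _ hxt, hxA, (hCeq x).1 hC⟩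
            · exact Or.inr ⟨by simp [List.mem_cons, hxp, hxt], hxA⟩
          · rintro (⟨hxpt, hxA, hC⟩ | ⟨hxpt, hxA⟩)
            · have hxt : x ∈ t := by
                rcases List.mem_cons.1 hxpt with h | h
                · exact absurd h hxp
                · exact h
              exact Or.inl ⟨hxt, hxA, (hCeq x).2 hC⟩
            · exact Or.inr ⟨fun h => hxpt (List.mem_cons_of_mem _ h), hxA⟩

end Toggles

/-! ### Stage closed forms -/

section Stage

variable [Fintype α] [PartialOrder α]

def Unb (rk : α → ℕ) (k : ℕ) (A : Finset α) (x : α) : Prop :=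
  (∀ a ∈ A, rk a < k → ¬ a ≤ x) ∧ (∀ a ∈ A, ¬ x ≤ a)

noncomputable def Mset (rk : α → ℕ) (k : ℕ) (A : Finset α) : Finset α :=
  Finset.univ.filter
    (fun x => k ≤ rk x ∧ Unb rk k A x ∧ ∀ z, z < x → k ≤ rk z → ¬ Unb rk k A z)

noncomputable def Cset (rk : α → ℕ) (k j : ℕ) (A : Finset α) : Finset α :=
  Finset.univ.filter
    (fun x => (rk x < k ∧ x ∈ A) ∨ (x ∈ Mset rk k A ∧ rk x < j) ∨ (j ≤ rk x ∧ x ∈ A))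

lemma mem_mset_iff {rk : α → ℕ} {k : ℕ} {A : Finset α} {x : α} :
    x ∈ Mset rk k A ↔
      k ≤ rk x ∧ Unb rk k A x ∧ ∀ z, z < x → k ≤ rk z → ¬ Unb rk k A z := by
  unfold Mset
  rw [Finset.mem_filter]
  simp only [Finset.mem_univ, true_and]

lemma mem_cset_iff {rk : α → ℕ} {k j : ℕ} {A : Finset α} {x : α} :
    x ∈ Cset rk k j A ↔
      (rk x < k ∧ x ∈ A) ∨ (x ∈ Mset rk k A ∧ rk x < j) ∨ (j ≤ rk x ∧ x ∈ A) := by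
  unfold Cset
  rw [Finset.mem_filter]
  simp only [Finset.mem_univ, true_and]

lemma exists_mset_le {rk : α → ℕ} {k : ℕ} {A : Finset α} {x : α}
    (hx : k ≤ rk x) (hu : Unb rk k A x) : ∃ m ∈ Mset rk k A, m ≤ x := by
  classical
  set T := Finset.univ.filter (fun z : α => z ≤ x ∧ k ≤ rk z ∧ Unb rk k A z) with hT
  have hxT : x ∈ T := by
    rw [hT, Finset.mem_filter]
    exact ⟨Finset.mem_univ _, le_rfl, hx, hu⟩
  obtain ⟨m, hmT, hmin⟩ := T.exists_minimal ⟨x, hxT⟩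
  rw [hT, Finset.mem_filter] at hmT
  obtain ⟨-, hmx, hkm, hum⟩ := hmT
  refine ⟨m, mem_mset_iff.2 ⟨hkm, hum, fun z hzm hkz huz => ?_⟩, hmx⟩
  refine absurd (hmin (show z ∈ T from ?_) hzm.le) (fun h => hzm.ne (le_antisymm hzm.le h))
  rw [hT, Finset.mem_filter]
  exact ⟨Finset.mem_univ _, le_of_lt (lt_of_lt_of_le hzm hmx), hkz, huz⟩

variable {rk : α → ℕ} (hcov : ∀ x y : α, x ⋖ y → rk y = rk x + 1)

include hcov in
lemma mem_rankToggle_iff {A : Finset α} (hA : IsAntichain (· ≤ ·) (↑A : Set α))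
    (i : ℕ) (x : α) :
    x ∈ rankToggle rk i A ↔
      ((rk x = i ∧ x ∉ A ∧ ∀ b ∈ A, rk b ≠ i → ¬ x ≤ b ∧ ¬ b ≤ x) ∨
        (rk x ≠ i ∧ x ∈ A)) := by
  unfold rankToggle
  have hmem : ∀ y : α, y ∈ (Finset.univ.filter (fun p => rk p = i)).toList ↔ rk y = i := by
    intro y
    rw [Finset.mem_toList, Finset.mem_filter]
    simp only [Finset.mem_univ, true_and]
  rw [foldr_toggle_mem hA _ (Finset.nodup_toList _) ?_ x]
  · simp only [hmem]
  · intro a ha b hb hne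
    exact rk_incomp hcov (((hmem a).1 ha).trans ((hmem b).1 hb).symm) hne

lemma rankToggle_isAntichain {A : Finset α} (hA : IsAntichain (· ≤ ·) (↑A : Set α))
    (i : ℕ) : IsAntichain (· ≤ ·) (↑(rankToggle rk i A) : Set α) :=
  foldr_toggle_isAntichain hA _

include hcov in
lemma cset_isAntichain {k j : ℕ} (hkj : k ≤ j) {A : Finset α}
    (hA : IsAntichain (· ≤ ·) (↑A : Set α)) :
    IsAntichain (· ≤ ·) (↑(Cset rk k j A) : Set α) := by
  intro x hx y hy hne hle
  rw [Finset.mem_coe, mem_cset_iff] at hx hy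
  have hlt : x < y := lt_of_le_of_ne hle hne
  have hrk : rk x < rk y := rk_lt_of_lt hcov y x hlt
  rcases hx with ⟨hxr, hxA⟩ | ⟨hxM, hxr⟩ | ⟨hxr, hxA⟩
  · rcases hy with ⟨hyr, hyA⟩ | ⟨hyM, hyr⟩ | ⟨hyr, hyA⟩
    · exact hA (Finset.mem_coe.2 hxA) (Finset.mem_coe.2 hyA) hne hle
    · exact ((mem_mset_iff.1 hyM).2.1).1 x hxA hxr hle
    · exact hA (Finset.mem_coe.2 hxA) (Finset.mem_coe.2 hyA) hne hle
  · rcases hy with ⟨hyr, hyA⟩ | ⟨hyM, hyr⟩ | ⟨hyr, hyA⟩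
    · have := (mem_mset_iff.1 hxM).1; omega
    · exact (mem_mset_iff.1 hyM).2.2 x hlt (mem_mset_iff.1 hxM).1
        (mem_mset_iff.1 hxM).2.1
    · exact ((mem_mset_iff.1 hxM).2.1).2 y hyA hle
  · rcases hy with ⟨hyr, hyA⟩ | ⟨hyM, hyr⟩ | ⟨hyr, hyA⟩
    · omega
    · omega
    · exact hA (Finset.mem_coe.2 hxA) (Finset.mem_coe.2 hyA) hne hle

lemma cset_base {k : ℕ} {A : Finset α} : Cset rk k k A = A := by
  ext x
  rw [mem_cset_iff]
  constructor
  · rintro (⟨-, h⟩ | ⟨hM, hr⟩ | ⟨-, h⟩)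
    · exact h
    · have := (mem_mset_iff.1 hM).1; omega
    · exact h
  · intro h
    by_cases hr : rk x < k
    · exact Or.inl ⟨hr, h⟩
    · exact Or.inr (Or.inr ⟨by omega, h⟩)

include hcov in
lemma cset_step {k j : ℕ} (hkj : k ≤ j) {A : Finset α}
    (hA : IsAntichain (· ≤ ·) (↑A : Set α)) :
    rankToggle rk j (Cset rk k j A) = Cset rk k (j + 1) A := by
  have hC := cset_isAntichain hcov hkj hA
  ext x
  rw [mem_rankToggle_iff hcov hC j x]
  conv_rhs => rw [mem_cset_iff]
  by_cases hxj : rk x = j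
  · -- rank j slice
    simp only [hxj]
    constructor
    · rintro (⟨-, hxC, hic⟩ | ⟨hne, -⟩)
      · -- show x ∈ Mset
        refine Or.inr (Or.inl ⟨mem_mset_iff.2 ⟨by omega, ⟨?_, ?_⟩, ?_⟩, by omega⟩)
        · -- no low element of A below x
          intro a ha har hax
          refine (hic a (mem_cset_iff.2 (Or.inl ⟨har, ha⟩)) (by omega)).2 hax
        · -- x not below A
          intro a ha hxa
          rcases lt_or_eq_of_le (rk_le_of_le hcov hxa) with hr | hr
          · exact (hic a (mem_cset_iff.2 (Or.inr (Or.inr ⟨by omega, ha⟩)))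
              (by omega)).1 hxa
          · have hxea : x = a := by
              rcases eq_or_lt_of_le hxa with h | h
              · exact h
              · have := rk_lt_of_lt hcov a x h; omega
            exact hxC (mem_cset_iff.2 (Or.inr (Or.inr ⟨by omega, hxea ▸ ha⟩)))
        · -- minimality
          intro z hzx hkz huz
          obtain ⟨m, hmM, hmz⟩ := exists_mset_le hkz huz
          have hmx : m < x := lt_of_le_of_lt hmz hzx
          have hmr : rk m < j := by
            have := rk_lt_of_lt hcov x m hmx; omega
          exact (hic m (mem_cset_iff.2 (Or.inr (Or.inl ⟨hmM, hmr⟩))) (by omega)).2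
            hmx.le
      · omega
    · rintro (⟨hr, -⟩ | ⟨hxM, -⟩ | ⟨hr, -⟩)
      · omega
      · -- x ∈ Mset gives the toggle-in condition
        obtain ⟨hkx, ⟨hu1, hu2⟩, hmin⟩ := mem_mset_iff.1 hxM
        refine Or.inl ⟨trivial, ?_, ?_⟩
        · intro hxC
          rcases mem_cset_iff.1 hxC with ⟨hr, -⟩ | ⟨-, hr⟩ | ⟨-, hxA⟩
          · omega
          · omega
          · exact hu2 x hxA le_rfl
        · intro b hbC hbj
          rcases mem_cset_iff.1 hbC with ⟨hbr, hbA⟩ | ⟨hbM, hbr⟩ | ⟨hbr, hbA⟩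
          · exact ⟨fun h => by
              have := rk_lt_of_lt hcov b x (lt_of_le_of_ne h (fun he => by
                subst he; omega)); omega,
              hu1 b hbA (by omega)⟩
          · constructor
            · intro h
              have hbx : x < b := lt_of_le_of_ne h (fun he => by subst he; omega)
              have := rk_lt_of_lt hcov b x hbx; omega
            · intro h
              have hbx : b < x := lt_of_le_of_ne h (fun he => by subst he; omega)
              exact hmin b hbx (mem_mset_iff.1 hbM).1 (mem_mset_iff.1 hbM).2.1
          · constructor
            · exact hu2 b hbA
            · intro h
              have := rk_le_of_le hcov h; omega
      · omega
  · -- rank ≠ j slice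
    constructor
    · rintro (⟨hr, -⟩ | ⟨-, hxC⟩)
      · exact absurd hr hxj
      · rcases mem_cset_iff.1 hxC with ⟨hr, hxA⟩ | ⟨hM, hr⟩ | ⟨hr, hxA⟩
        · exact Or.inl ⟨hr, hxA⟩
        · exact Or.inr (Or.inl ⟨hM, by omega⟩)
        · exact Or.inr (Or.inr ⟨by omega, hxA⟩)
    · intro h
      refine Or.inr ⟨hxj, mem_cset_iff.2 ?_⟩
      rcases h with ⟨hr, hxA⟩ | ⟨hM, hr⟩ | ⟨hr, hxA⟩
      · exact Or.inl ⟨hr, hxA⟩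
      · exact Or.inr (Or.inl ⟨hM, by omega⟩)
      · exact Or.inr (Or.inr ⟨by omega, hxA⟩)

include hcov in
lemma stage_eq {A : Finset α} (hA : IsAntichain (· ≤ ·) (↑A : Set α)) (k : ℕ) :
    ∀ m : ℕ, (List.range' k m).foldl (fun C j => rankToggle rk j C) A
      = Cset rk k (k + m) A := by
  intro m
  induction m with
  | zero => simpa using cset_base.symm
  | succ m ih =>
    rw [List.range'_concat, List.foldl_append, ih]
    simp only [List.foldl_cons, List.foldl_nil, Nat.one_mul]
    rw [cset_step hcov (by omega) hA]
    have h1 : k + m + 1 = k + (m + 1) := by omega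
    rw [h1]

end Stage

/-! ### Ideal side: eta, Gt, Psi -/

section IdealSide

variable [Fintype α] [PartialOrder α]

noncomputable def eta (A : Finset α) : Finset α :=
  Finset.univ.filter (fun x => ∀ a ∈ A, ¬ a ≤ x)

noncomputable def Gt (rk : α → ℕ) (j : ℕ) (I : Finset α) : Finset α :=
  Finset.univ.filter (fun x =>
    if rk x = j then ((x ∈ I ∧ ∃ y ∈ I, x < y) ∨ (x ∉ I ∧ ∀ y, y < x → y ∈ I))
    else x ∈ I)

noncomputable def Psi (rk : α → ℕ) (k : ℕ) (I : Finset α) : Finset α :=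
  Finset.univ.filter (fun x =>
    if rk x < k then x ∈ I else ∃ m, m ∉ I ∧ (∀ y, y < m → y ∈ I) ∧ x ≤ m)

lemma mem_eta {A : Finset α} {x : α} : x ∈ eta A ↔ ∀ a ∈ A, ¬ a ≤ x := by
  unfold eta
  rw [Finset.mem_filter]
  simp only [Finset.mem_univ, true_and]

lemma eta_isLowerSet (A : Finset α) : IsLowerSet (↑(eta A) : Set α) := by
  intro a b hba ha
  rw [Finset.mem_coe, mem_eta] at ha ⊢
  intro c hc hcb
  exact ha c hc (hcb.trans hba)

lemma min_eta {A : Finset α} (hA : IsAntichain (· ≤ ·) (↑A : Set α)) (m : α) :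
    (m ∉ eta A ∧ ∀ y, y < m → y ∈ eta A) ↔ m ∈ A := by
  constructor
  · rintro ⟨h1, h2⟩
    rw [mem_eta] at h1
    push_neg at h1
    obtain ⟨a, haA, ham⟩ := h1
    rcases eq_or_lt_of_le ham with rfl | hlt
    · exact haA
    · have := mem_eta.1 (h2 a hlt) a haA
      exact absurd le_rfl this
  · intro hm
    constructor
    · intro h
      exact mem_eta.1 h m hm le_rfl
    · intro y hym
      rw [mem_eta]
      intro a ha hay
      have ham : a < m := lt_of_le_of_lt hay hym
      exact hA (Finset.mem_coe.2 ha) (Finset.mem_coe.2 hm) (ne_of_lt ham) ham.le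

lemma eta_inj {A B : Finset α} (hA : IsAntichain (· ≤ ·) (↑A : Set α))
    (hB : IsAntichain (· ≤ ·) (↑B : Set α)) (h : eta A = eta B) : A = B := by
  ext m
  rw [← min_eta hA m, ← min_eta hB m, h]

lemma mem_Gt_of_eq {rk : α → ℕ} {j : ℕ} {I : Finset α} {x : α} (h : rk x = j) :
    x ∈ Gt rk j I ↔ ((x ∈ I ∧ ∃ y ∈ I, x < y) ∨ (x ∉ I ∧ ∀ y, y < x → y ∈ I)) := by
  unfold Gt
  rw [Finset.mem_filter, if_pos h]
  simp only [Finset.mem_univ, true_and]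

lemma mem_Gt_of_ne {rk : α → ℕ} {j : ℕ} {I : Finset α} {x : α} (h : rk x ≠ j) :
    x ∈ Gt rk j I ↔ x ∈ I := by
  unfold Gt
  rw [Finset.mem_filter, if_neg h]
  simp only [Finset.mem_univ, true_and]

lemma mem_Psi_of_lt {rk : α → ℕ} {k : ℕ} {I : Finset α} {x : α} (h : rk x < k) :
    x ∈ Psi rk k I ↔ x ∈ I := by
  unfold Psi
  rw [Finset.mem_filter, if_pos h]
  simp only [Finset.mem_univ, true_and]

lemma mem_Psi_of_ge {rk : α → ℕ} {k : ℕ} {I : Finset α} {x : α} (h : ¬ rk x < k) :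
    x ∈ Psi rk k I ↔ ∃ m, m ∉ I ∧ (∀ y, y < m → y ∈ I) ∧ x ≤ m := by
  unfold Psi
  rw [Finset.mem_filter, if_neg h]
  simp only [Finset.mem_univ, true_and]

lemma Psi_top {rk : α → ℕ} {N : ℕ} (hN : ∀ x : α, rk x ≤ N) (I : Finset α) :
    Psi rk (N + 1) I = I := by
  ext x
  rw [mem_Psi_of_lt (by have := hN x; omega)]

variable {rk : α → ℕ} (hcov : ∀ x y : α, x ⋖ y → rk y = rk x + 1)

include hcov in
lemma Gt_isLowerSet {j : ℕ} {I : Finset α} (hI : IsLowerSet (↑I : Set α)) :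
    IsLowerSet (↑(Gt rk j I) : Set α) := by
  intro a b hba haJ
  rcases eq_or_lt_of_le hba with rfl | hlt
  · exact haJ
  · rw [Finset.mem_coe] at haJ ⊢
    have hrb : rk b < rk a := rk_lt_of_lt hcov a b hlt
    have haI : a ∈ I ∨ (rk a = j ∧ a ∉ I ∧ ∀ y, y < a → y ∈ I) := by
      by_cases hra : rk a = j
      · rcases (mem_Gt_of_eq hra).1 haJ with ⟨h, -⟩ | ⟨h1, h2⟩
        · exact Or.inl h
        · exact Or.inr ⟨hra, h1, h2⟩
      · exact Or.inl ((mem_Gt_of_ne hra).1 haJ)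
    rcases haI with haI | ⟨hra, -, hall⟩
    · have hbI : b ∈ I := Finset.mem_coe.1 (hI hba (Finset.mem_coe.2 haI))
      by_cases hrb' : rk b = j
      · exact (mem_Gt_of_eq hrb').2 (Or.inl ⟨hbI, a, haI, hlt⟩)
      · exact (mem_Gt_of_ne hrb').2 hbI
    · have hbI : b ∈ I := hall b hlt
      have hrb' : rk b ≠ j := by omega
      exact (mem_Gt_of_ne hrb').2 hbI

include hcov in
lemma Gt_invol {j : ℕ} {I : Finset α} (hI : IsLowerSet (↑I : Set α)) :
    Gt rk j (Gt rk j I) = I := by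
  ext x
  by_cases hrx : rk x = j
  · rw [mem_Gt_of_eq hrx]
    have hup : ∀ y, x < y → (y ∈ Gt rk j I ↔ y ∈ I) := by
      intro y hy
      exact mem_Gt_of_ne (by have := rk_lt_of_lt hcov y x hy; omega)
    have hdn : ∀ y, y < x → (y ∈ Gt rk j I ↔ y ∈ I) := by
      intro y hy
      exact mem_Gt_of_ne (by have := rk_lt_of_lt hcov x y hy; omega)
    by_cases hxI : x ∈ I
    · constructor
      · intro _
        exact hxI
      · intro _
        by_cases hex : ∃ y ∈ I, x < y
        · have hxJ : x ∈ Gt rk j I := (mem_Gt_of_eq hrx).2 (Or.inl ⟨hxI, hex⟩)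
          obtain ⟨y, hyI, hxy⟩ := hex
          exact Or.inl ⟨hxJ, y, (hup y hxy).2 hyI, hxy⟩
        · have hxJ : x ∉ Gt rk j I := by
            rw [mem_Gt_of_eq hrx]
            rintro (⟨-, hex'⟩ | ⟨h, -⟩)
            · exact hex hex'
            · exact h hxI
          refine Or.inr ⟨hxJ, fun y hy => (hdn y hy).2 ?_⟩
          exact Finset.mem_coe.1 (hI hy.le (Finset.mem_coe.2 hxI))
    · constructor
      · rintro (⟨hxJ, y, hyJ, hxy⟩ | ⟨hxJ, hall⟩)
        · have hyI : y ∈ I := (hup y hxy).1 hyJ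
          exact absurd (Finset.mem_coe.1 (hI hxy.le (Finset.mem_coe.2 hyI))) hxI
        · have hallI : ∀ y, y < x → y ∈ I := fun y hy => (hdn y hy).1 (hall y hy)
          exact absurd ((mem_Gt_of_eq hrx).2 (Or.inr ⟨hxI, hallI⟩)) hxJ
      · intro h
        exact absurd h hxI
  · rw [mem_Gt_of_ne hrx, mem_Gt_of_ne hrx]

include hcov in
lemma exists_gt_local {I : Finset α} (hI : IsLowerSet (↑I : Set α)) (x : α) :
    (∃ y ∈ I, x < y) ↔ (∃ y ∈ I, x ⋖ y) := by
  constructor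
  · rintro ⟨y, hyI, hxy⟩
    obtain ⟨z, hxz, hzy⟩ := hxy.exists_covby_le
    exact ⟨z, Finset.mem_coe.1 (hI hzy (Finset.mem_coe.2 hyI)), hxz⟩
  · rintro ⟨y, hyI, hxy⟩
    exact ⟨y, hyI, hxy.lt⟩

include hcov in
lemma forall_lt_local {I : Finset α} (hI : IsLowerSet (↑I : Set α)) (x : α) :
    (∀ y, y < x → y ∈ I) ↔ (∀ y, y ⋖ x → y ∈ I) := by
  constructor
  · intro h y hy
    exact h y hy.lt
  · intro h y hy
    obtain ⟨z, hyz, hzx⟩ := hy.exists_le_covby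
    exact Finset.mem_coe.1 (hI hyz (Finset.mem_coe.2 (h z hzx)))

include hcov in
lemma mem_Gt_local {j : ℕ} {I : Finset α} (hI : IsLowerSet (↑I : Set α)) {x : α}
    (h : rk x = j) :
    x ∈ Gt rk j I ↔
      ((x ∈ I ∧ ∃ y ∈ I, x ⋖ y) ∨ (x ∉ I ∧ ∀ y, y ⋖ x → y ∈ I)) := by
  rw [mem_Gt_of_eq h, exists_gt_local hcov hI, forall_lt_local hcov hI]

include hcov in
lemma Gt_comm {i j : ℕ} (hij : i + 2 ≤ j) {I : Finset α}
    (hI : IsLowerSet (↑I : Set α)) :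
    Gt rk i (Gt rk j I) = Gt rk j (Gt rk i I) := by
  have hJi : IsLowerSet (↑(Gt rk i I) : Set α) := Gt_isLowerSet hcov hI
  have hJj : IsLowerSet (↑(Gt rk j I) : Set α) := Gt_isLowerSet hcov hI
  ext x
  by_cases hxi : rk x = i
  · have hxj : rk x ≠ j := by omega
    have hL := mem_Gt_local hcov hJj (I := Gt rk j I) hxi
    have hR := mem_Gt_of_ne (I := Gt rk i I) (rk := rk) hxj
    have hR2 := mem_Gt_local hcov hI (I := I) hxi
    rw [hL, hR, hR2]
    have e1 : x ∈ Gt rk j I ↔ x ∈ I := mem_Gt_of_ne hxj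
    have e2 : ∀ y : α, x ⋖ y → (y ∈ Gt rk j I ↔ y ∈ I) := by
      intro y hy
      refine mem_Gt_of_ne ?_
      have := hcov x y hy
      omega
    have e3 : ∀ y : α, y ⋖ x → (y ∈ Gt rk j I ↔ y ∈ I) := by
      intro y hy
      refine mem_Gt_of_ne ?_
      have := hcov y x hy
      omega
    constructor
    · rintro (⟨h1, y, hy1, hy2⟩ | ⟨h1, h2⟩)
      · exact Or.inl ⟨e1.1 h1, y, (e2 y hy2).1 hy1, hy2⟩
      · exact Or.inr ⟨fun h => h1 (e1.2 h), fun y hy => (e3 y hy).1 (h2 y hy)⟩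
    · rintro (⟨h1, y, hy1, hy2⟩ | ⟨h1, h2⟩)
      · exact Or.inl ⟨e1.2 h1, y, (e2 y hy2).2 hy1, hy2⟩
      · exact Or.inr ⟨fun h => h1 (e1.1 h), fun y hy => (e3 y hy).2 (h2 y hy)⟩
  · by_cases hxj : rk x = j
    · have hxi' : rk x ≠ i := hxi
      have hL := mem_Gt_of_ne (I := Gt rk j I) (rk := rk) hxi'
      have hL2 := mem_Gt_local hcov hI (I := I) hxj
      have hR := mem_Gt_local hcov hJi (I := Gt rk i I) hxj
      rw [hL, hL2, hR]
      have e1 : x ∈ Gt rk i I ↔ x ∈ I := mem_Gt_of_ne hxi'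
      have e2 : ∀ y : α, x ⋖ y → (y ∈ Gt rk i I ↔ y ∈ I) := by
        intro y hy
        refine mem_Gt_of_ne ?_
        have := hcov x y hy
        omega
      have e3 : ∀ y : α, y ⋖ x → (y ∈ Gt rk i I ↔ y ∈ I) := by
        intro y hy
        refine mem_Gt_of_ne ?_
        have := hcov y x hy
        omega
      constructor
      · rintro (⟨h1, y, hy1, hy2⟩ | ⟨h1, h2⟩)
        · exact Or.inl ⟨e1.2 h1, y, (e2 y hy2).2 hy1, hy2⟩
        · exact Or.inr ⟨fun h => h1 (e1.1 h), fun y hy => (e3 y hy).2 (h2 y hy)⟩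
      · rintro (⟨h1, y, hy1, hy2⟩ | ⟨h1, h2⟩)
        · exact Or.inl ⟨e1.1 h1, y, (e2 y hy2).1 hy1, hy2⟩
        · exact Or.inr ⟨fun h => h1 (e1.2 h), fun y hy => (e3 y hy).1 (h2 y hy)⟩
    · rw [mem_Gt_of_ne (I := Gt rk j I) (rk := rk) hxi, mem_Gt_of_ne (I := I) hxj,
        mem_Gt_of_ne (I := Gt rk i I) (rk := rk) hxj, mem_Gt_of_ne (I := I) hxi]

include hcov in
lemma Gt_Psi_slice {k : ℕ} {I : Finset α} :
    Gt rk k (Psi rk (k + 1) I) = Psi rk k I := by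
  ext x
  by_cases hxk : rk x = k
  · rw [mem_Gt_of_eq hxk, mem_Psi_of_ge (k := k) (I := I) (by omega)]
    have hxJ : x ∈ Psi rk (k + 1) I ↔ x ∈ I := mem_Psi_of_lt (by omega)
    constructor
    · rintro (⟨h1, y, hy1, hy2⟩ | ⟨h1, h2⟩)
      · -- x ∈ I, exists y above in Psi
        have hry : ¬ rk y < k + 1 := by
          have := rk_lt_of_lt hcov y x hy2
          omega
        obtain ⟨m, hm1, hm2, hym⟩ := (mem_Psi_of_ge hry).1 hy1
        exact ⟨m, hm1, hm2, (hy2.le.trans hym)⟩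
      · -- x ∉ I and all below in I: x itself is minimal in complement
        refine ⟨x, fun h => h1 (hxJ.2 h), fun y hy => ?_, le_rfl⟩
        have hry : rk y < k + 1 := by
          have := rk_lt_of_lt hcov x y hy
          omega
        exact (mem_Psi_of_lt hry).1 (h2 y hy)
    · rintro ⟨m, hm1, hm2, hxm⟩
      by_cases hxI : x ∈ I
      · -- x < m, use y := m
        have hxm' : x < m := lt_of_le_of_ne hxm (fun he => hm1 (he ▸ hxI))
        have hrm : ¬ rk m < k + 1 := by
          have := rk_lt_of_lt hcov m x hxm'
          omega
        refine Or.inl ⟨hxJ.2 hxI, m, ?_, hxm'⟩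
        exact (mem_Psi_of_ge hrm).2 ⟨m, hm1, hm2, le_rfl⟩
      · -- x = m
        have hxem : x = m := by
          rcases eq_or_lt_of_le hxm with h | h
          · exact h
          · exact absurd (hm2 x h) hxI
        subst hxem
        refine Or.inr ⟨fun h => hxI (hxJ.1 h), fun y hy => ?_⟩
        have hry : rk y < k + 1 := by
          have := rk_lt_of_lt hcov x y hy
          omega
        exact (mem_Psi_of_lt hry).2 (hm2 y hy)
  · by_cases hlt : rk x < k
    · rw [mem_Gt_of_ne hxk, mem_Psi_of_lt (k := k + 1) (by omega),
        mem_Psi_of_lt (k := k) hlt]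
    · rw [mem_Gt_of_ne hxk, mem_Psi_of_ge (k := k + 1) (by omega),
        mem_Psi_of_ge (k := k) hlt]

end IdealSide

/-! ### Transfer identity and assembly -/

section Assemble

variable [Fintype α] [PartialOrder α] {rk : α → ℕ}
  (hcov : ∀ x y : α, x ⋖ y → rk y = rk x + 1)

include hcov in
lemma eta_cset {N : ℕ} (hN : ∀ x : α, rk x ≤ N) {A : Finset α}
    (hA : IsAntichain (· ≤ ·) (↑A : Set α)) (k : ℕ) :
    eta (Cset rk k (N + 1) A) = Psi rk k (eta A) := by
  ext x
  rw [mem_eta]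
  by_cases hrx : rk x < k
  · rw [mem_Psi_of_lt hrx, mem_eta]
    constructor
    · intro h a haA
      by_cases hra : rk a < k
      · exact h a (mem_cset_iff.2 (Or.inl ⟨hra, haA⟩))
      · intro hax
        have := rk_le_of_le hcov hax
        omega
    · intro h b hbC
      rcases mem_cset_iff.1 hbC with ⟨-, hbA⟩ | ⟨hbM, -⟩ | ⟨hbr, hbA⟩
      · exact h b hbA
      · intro hbx
        have h1 := (mem_mset_iff.1 hbM).1
        have := rk_le_of_le hcov hbx
        omega
      · exact h b hbA
  · rw [mem_Psi_of_ge hrx]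
    have hiff : (∃ m, m ∉ eta A ∧ (∀ y, y < m → y ∈ eta A) ∧ x ≤ m) ↔
        ∃ a ∈ A, x ≤ a := by
      constructor
      · rintro ⟨m, h1, h2, h3⟩
        exact ⟨m, (min_eta hA m).1 ⟨h1, h2⟩, h3⟩
      · rintro ⟨a, ha, hxa⟩
        obtain ⟨h1, h2⟩ := (min_eta hA a).2 ha
        exact ⟨a, h1, h2, hxa⟩
    rw [hiff]
    constructor
    · intro h
      by_contra hno
      push_neg at hno
      have hu : Unb rk k A x := by
        refine ⟨fun a haA hra hax => ?_, hno⟩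
        exact h a (mem_cset_iff.2 (Or.inl ⟨hra, haA⟩)) hax
      obtain ⟨m, hmM, hmx⟩ := exists_mset_le (by omega) hu
      have hmr : rk m < N + 1 := by have := hN m; omega
      exact h m (mem_cset_iff.2 (Or.inr (Or.inl ⟨hmM, hmr⟩))) hmx
    · rintro ⟨a, haA, hxa⟩ b hbC hbx
      rcases mem_cset_iff.1 hbC with ⟨hbr, hbA⟩ | ⟨hbM, -⟩ | ⟨hbr, hbA⟩
      · have hba : b ≤ a := hbx.trans hxa
        by_cases hbeq : b = a
        · subst hbeq
          have hxb : x = b := le_antisymm hxa hbx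
          subst hxb
          omega
        · exact hA (Finset.mem_coe.2 hbA) (Finset.mem_coe.2 haA) hbeq hba
      · exact (mem_mset_iff.1 hbM).2.1.2 a haA (hbx.trans hxa)
      · have := hN b
        omega

noncomputable def Tg (hcov : ∀ x y : α, x ⋖ y → rk y = rk x + 1) (j : ℕ)
    (s : {I : Finset α // IsLowerSet (↑I : Set α)}) :
    {I : Finset α // IsLowerSet (↑I : Set α)} :=
  ⟨Gt rk j s.1, Gt_isLowerSet hcov s.2⟩

lemma Tg_invol : ∀ (j : ℕ) s, Tg hcov j (Tg hcov j s) = s :=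
  fun _ s => Subtype.ext (Gt_invol hcov s.2)

lemma Tg_comm : ∀ i j, i + 2 ≤ j → ∀ s, Tg hcov i (Tg hcov j s) = Tg hcov j (Tg hcov i s) :=
  fun _ _ hij s => Subtype.ext (Gt_comm hcov hij s.2)

include hcov in
lemma act_desc_eq {N : ℕ} (hN : ∀ x : α, rk x ≤ N) :
    ∀ d k, k + d = N + 1 → ∀ s : {I : Finset α // IsLowerSet (↑I : Set α)},
      (act (Tg hcov) (desc N k) s).1 = Psi rk k s.1 := by
  intro d
  induction d with
  | zero =>
    intro k hk s
    obtain rfl : k = N + 1 := by omega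
    rw [desc_top, act_nil, Psi_top hN]
  | succ d ih =>
    intro k hk s
    have hkN : k ≤ N := by omega
    rw [desc_eq_concat hkN, act_append]
    have h1 : act (Tg hcov) [k] (act (Tg hcov) (desc N (k + 1)) s)
        = Tg hcov k (act (Tg hcov) (desc N (k + 1)) s) := rfl
    rw [h1]
    show Gt rk k ((act (Tg hcov) (desc N (k + 1)) s).1) = Psi rk k s.1
    rw [ih (k + 1) (by omega) s, Gt_Psi_slice hcov]

include hcov in
lemma rvac_partial {N : ℕ} (hN : ∀ x : α, rk x ≤ N) {A : Finset α}
    (hA : IsAntichain (· ≤ ·) (↑A : Set α)) :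
    ∀ m, m ≤ N + 1 →
      IsAntichain (· ≤ ·) (↑((List.range m).foldl
        (fun B k => (List.range' k (N + 1 - k)).foldl
          (fun C j => rankToggle rk j C) B) A) : Set α) ∧
      eta ((List.range m).foldl
        (fun B k => (List.range' k (N + 1 - k)).foldl
          (fun C j => rankToggle rk j C) B) A)
        = (act (Tg hcov) ((List.range m).flatMap (desc N))
            ⟨eta A, eta_isLowerSet A⟩).1 := by
  intro m
  induction m with
  | zero =>
    intro _
    exact ⟨hA, rfl⟩
  | succ m ih =>
    intro hm
    obtain ⟨ha, he⟩ := ih (by omega)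
    rw [List.range_succ, List.foldl_append, List.flatMap_append]
    simp only [List.foldl_cons, List.foldl_nil, List.flatMap_cons, List.flatMap_nil,
      List.append_nil]
    rw [stage_eq hcov ha m (N + 1 - m)]
    have hmN : m + (N + 1 - m) = N + 1 := by omega
    rw [hmN]
    constructor
    · exact cset_isAntichain hcov (by omega) ha
    · rw [eta_cset hcov hN ha m, act_append]
      have h2 := act_desc_eq hcov hN (N + 1 - m) m (by omega)
        (act (Tg hcov) ((List.range m).flatMap (desc N)) ⟨eta A, eta_isLowerSet A⟩)
      rw [h2, he]

end Assemble

end RvacAux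


open RvacAux in
theorem rvac_involution [Fintype α] [PartialOrder α] (rk : α → ℕ)
    (hrk : IsRankFunction rk) (A : Finset α)
    (hA : IsAntichain (· ≤ ·) (↑A : Set α)) :
    IsAntichain (· ≤ ·) (↑(rvac rk (Finset.univ.sup rk) A) : Set α) ∧
    rvac rk (Finset.univ.sup rk) (rvac rk (Finset.univ.sup rk) A) = A := by
  classical
  obtain ⟨-, hcov⟩ := hrk
  set N := Finset.univ.sup rk with hNdef
  have hN : ∀ x : α, rk x ≤ N := fun x => Finset.le_sup (Finset.mem_univ x)
  have hword : (List.range (N + 1)).flatMap (desc N) = evac N 0 := by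
    unfold evac
    rw [Nat.sub_zero, ← List.range_eq_range']
  have hrv : ∀ B : Finset α, rvac rk N B = (List.range (N + 1)).foldl
      (fun B k => (List.range' k (N + 1 - k)).foldl
        (fun C j => rankToggle rk j C) B) B := fun B => rfl
  have hr1 := rvac_partial hcov hN hA (N + 1) le_rfl
  rw [hword] at hr1
  rw [← hrv A] at hr1
  have hac1 : IsAntichain (· ≤ ·) (↑(rvac rk N A) : Set α) := hr1.1
  have he1 := hr1.2
  have hr2 := rvac_partial hcov hN hac1 (N + 1) le_rfl
  rw [hword] at hr2
  rw [← hrv (rvac rk N A)] at hr2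
  have hac2 : IsAntichain (· ≤ ·) (↑(rvac rk N (rvac rk N A)) : Set α) := hr2.1
  have he2 := hr2.2
  have hsub : (⟨eta (rvac rk N A), eta_isLowerSet _⟩ :
      {I : Finset α // IsLowerSet (↑I : Set α)})
      = act (Tg hcov) (evac N 0) ⟨eta A, eta_isLowerSet A⟩ := Subtype.ext he1
  have he3 : eta (rvac rk N (rvac rk N A)) = eta A := by
    rw [he2, hsub, ← act_append,
      act_evac_invol (Tg hcov) (Tg_invol hcov) (Tg_comm hcov) N (N + 1) 0
        (by omega)]
  exact ⟨hac1, eta_inj hac2 hA he3⟩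
end

section
/- Let P be a finite ranked poset, p a minimal element of P, and P' = {q ∈ P : q ≱ p}. For any antichain A of P: if A ⊆ P', then Rvac_P(A) = {p} ∪ Rvac_{P'}(A); and if p ∈ A, then Rvac_P(A) = Rvac_{P'}(A \ {p}). -/
open scoped Classical

variable {α : Type*}

noncomputable def rankToggleOn [Fintype α] [PartialOrder α] (s : Set α)
    (rk : α → ℕ) (i : ℕ) (A : Finset α) : Finset α :=
  (Finset.univ.filter (fun p => p ∈ s ∧ rk p = i)).toList.foldr toggle A

noncomputable def rvacOn [Fintype α] [PartialOrder α] (s : Set α) (rk : α → ℕ)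
    (N : ℕ) (A : Finset α) : Finset α :=
  (List.range (N + 1)).foldl
    (fun B k => (List.range' k (N + 1 - k)).foldl
      (fun C j => rankToggleOn s rk j C) B) A

noncomputable def rowmotionOn [Fintype α] [PartialOrder α] (s : Set α)
    (A : Finset α) : Finset α :=
  Finset.univ.filter
    (fun x => x ∈ s ∧ (∀ y ∈ A, ¬ x ≤ y) ∧
      ∀ z ∈ s, (∀ y ∈ A, ¬ z ≤ y) → z ≤ x → z = x)

section Basics

variable [PartialOrder α]

/-- closed form for a sweep of toggles over a set `S` of pairwise incomparable elements -/
noncomputable def sweep (S A : Finset α) : Finset α :=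
  A.filter (fun a => a ∉ S) ∪
    S.filter (fun x => x ∉ A ∧ ∀ a ∈ A, a ∉ S → ¬ x ≤ a ∧ ¬ a ≤ x)

lemma mem_sweep {S A : Finset α} {z : α} :
    z ∈ sweep S A ↔ (z ∈ A ∧ z ∉ S) ∨
      (z ∈ S ∧ z ∉ A ∧ ∀ a ∈ A, a ∉ S → ¬ z ≤ a ∧ ¬ a ≤ z) := by
  simp [sweep, Finset.mem_union, Finset.mem_filter, and_assoc]

lemma sweep_antichain {S A : Finset α}
    (hS : ∀ x ∈ S, ∀ y ∈ S, x ≠ y → ¬ x ≤ y)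
    (hA : IsAntichain (· ≤ ·) (↑A : Set α)) :
    IsAntichain (· ≤ ·) (↑(sweep S A) : Set α) := by
  intro z hz w hw hzw hle
  simp only [Finset.mem_coe, mem_sweep] at hz hw
  rcases hz with ⟨hzA, hzS⟩ | ⟨hzS, hzA, hzc⟩ <;>
    rcases hw with ⟨hwA, hwS⟩ | ⟨hwS, hwA, hwc⟩
  · exact hA (Finset.mem_coe.mpr hzA) (Finset.mem_coe.mpr hwA) hzw hle
  · exact (hwc z hzA hzS).2 hle
  · exact (hzc w hwA hwS).1 hle
  · exact hS z hzS w hwS hzw hle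

lemma toggle_antichain {A : Finset α} (x : α)
    (hA : IsAntichain (· ≤ ·) (↑A : Set α)) :
    IsAntichain (· ≤ ·) (↑(toggle x A) : Set α) := by
  unfold toggle
  split_ifs with h1 h2
  · exact hA.subset (by intro z hz; exact Finset.mem_coe.mpr (Finset.mem_of_mem_erase (Finset.mem_coe.mp hz)))
  · exact h2
  · exact hA

private lemma guard_mp {A : Finset α} (x : α) {Lf : Finset α}
    {C : α → Prop} (h : ∀ a ∈ A, a ∉ Lf → C a) :
    ∀ a ∈ A, a ∉ insert x Lf → C a := fun a ha hins =>
  h a ha (fun hL => hins (Finset.mem_insert_of_mem hL))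

private lemma guard_mpr {A : Finset α} {x : α} {Lf : Finset α}
    {C : α → Prop} (hx : x ∉ A ∨ C x) (h : ∀ a ∈ A, a ∉ insert x Lf → C a) :
    ∀ a ∈ A, a ∉ Lf → C a := by
  intro a ha hL
  by_cases hax : a = x
  · subst hax
    rcases hx with hx | hx
    · exact absurd ha hx
    · exact hx
  · exact h a ha (fun hins => by
      rcases Finset.mem_insert.mp hins with h' | h'
      · exact hax h'
      · exact hL h')

lemma foldr_toggle_eq (L : List α) (hnd : L.Nodup)
    (hinc : ∀ x ∈ L, ∀ y ∈ L, x ≠ y → ¬ x ≤ y)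
    (A : Finset α) (hA : IsAntichain (· ≤ ·) (↑A : Set α)) :
    L.foldr toggle A = sweep L.toFinset A := by
  induction L with
  | nil =>
    simp only [List.foldr_nil, List.toFinset_nil]
    ext z
    simp [mem_sweep]
  | cons x L ih =>
    have hndL : L.Nodup := (List.nodup_cons.mp hnd).2
    have hxL : x ∉ L := (List.nodup_cons.mp hnd).1
    have hincL : ∀ a ∈ L, ∀ b ∈ L, a ≠ b → ¬ a ≤ b := fun a ha b hb =>
      hinc a (List.mem_cons_of_mem _ ha) b (List.mem_cons_of_mem _ hb)
    have hxinc : ∀ y ∈ L, ¬ x ≤ y ∧ ¬ y ≤ x := by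
      intro y hy
      have hxy : x ≠ y := fun h => hxL (h ▸ hy)
      exact ⟨hinc x (List.mem_cons_self) y (List.mem_cons_of_mem _ hy) hxy,
        hinc y (List.mem_cons_of_mem _ hy) x (List.mem_cons_self) hxy.symm⟩
    have hSinc : ∀ a ∈ L.toFinset, ∀ b ∈ L.toFinset, a ≠ b → ¬ a ≤ b := by
      intro a ha b hb
      exact hincL a (List.mem_toFinset.mp ha) b (List.mem_toFinset.mp hb)
    have hsw : IsAntichain (· ≤ ·) (↑(sweep L.toFinset A) : Set α) :=
      sweep_antichain hSinc hA
    rw [List.foldr_cons, ih hndL hincL, List.toFinset_cons]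
    have hxLf : x ∉ L.toFinset := fun h => hxL (List.mem_toFinset.mp h)
    by_cases hxA : x ∈ A
    · -- x gets erased
      have hxmem : x ∈ sweep L.toFinset A := by
        rw [mem_sweep]; exact Or.inl ⟨hxA, hxLf⟩
      rw [toggle, if_pos hxmem]
      ext z
      rw [Finset.mem_erase, mem_sweep, mem_sweep]
      constructor
      · rintro ⟨hzx, ⟨hzA, hzS⟩ | ⟨hzS, hzA, hzc⟩⟩
        · exact Or.inl ⟨hzA, by simp [Finset.mem_insert, hzx, hzS]⟩
        · refine Or.inr ⟨Finset.mem_insert_of_mem hzS, hzA, ?_⟩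
          exact guard_mp _ hzc
      · rintro (⟨hzA, hzS⟩ | ⟨hzS, hzA, hzc⟩)
        · rw [Finset.mem_insert] at hzS
          push_neg at hzS
          exact ⟨hzS.1, Or.inl ⟨hzA, hzS.2⟩⟩
        · rcases Finset.mem_insert.mp hzS with rfl | hzS'
          · exact absurd hxA hzA
          · have hzx : z ≠ x := fun h => hzA (h ▸ hxA)
            have hCx : ¬ z ≤ x ∧ ¬ x ≤ z :=
              ⟨(hxinc z (List.mem_toFinset.mp hzS')).2, (hxinc z (List.mem_toFinset.mp hzS')).1⟩
            exact ⟨hzx, Or.inr ⟨hzS', hzA, guard_mpr (Or.inr hCx) hzc⟩⟩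
    · -- x not in A
      have hxns : x ∉ sweep L.toFinset A := by
        rw [mem_sweep]; push_neg
        exact ⟨fun h => absurd h hxA, fun h => absurd h hxLf⟩
      rw [toggle, if_neg hxns]
      by_cases hc : ∀ a ∈ A, a ∉ L.toFinset → ¬ x ≤ a ∧ ¬ a ≤ x
      · have hac : IsAntichain (· ≤ ·) (↑(insert x (sweep L.toFinset A)) : Set α) := by
          intro z hz w hw hzw hle
          simp only [Finset.coe_insert, Set.mem_insert_iff, Finset.mem_coe] at hz hw
          rcases hz with rfl | hz <;> rcases hw with rfl | hw
          · exact hzw rfl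
          · -- z = x ≤ w ∈ sweep
            rw [mem_sweep] at hw
            rcases hw with ⟨hwA, hwS⟩ | ⟨hwS, hwA, hwc⟩
            · exact (hc w hwA hwS).1 hle
            · exact (hxinc w (List.mem_toFinset.mp hwS)).1 hle
          · rw [mem_sweep] at hz
            rcases hz with ⟨hzA, hzS⟩ | ⟨hzS, hzA, hzc⟩
            · exact (hc z hzA hzS).2 hle
            · exact (hxinc z (List.mem_toFinset.mp hzS)).2 hle
          · exact hsw (Finset.mem_coe.mpr hz) (Finset.mem_coe.mpr hw) hzw hle
        rw [if_pos hac]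
        ext z
        rw [Finset.mem_insert, mem_sweep, mem_sweep]
        constructor
        · rintro (rfl | (⟨hzA, hzS⟩ | ⟨hzS, hzA, hzc⟩))
          · exact Or.inr ⟨Finset.mem_insert_self _ _, hxA, guard_mp _ hc⟩
          · refine Or.inl ⟨hzA, fun h => ?_⟩
            rcases Finset.mem_insert.mp h with rfl | h'
            · exact hxA hzA
            · exact hzS h'
          · exact Or.inr ⟨Finset.mem_insert_of_mem hzS, hzA, guard_mp _ hzc⟩
        · rintro (⟨hzA, hzS⟩ | ⟨hzS, hzA, hzc⟩)
          · exact Or.inr (Or.inl ⟨hzA, fun h => hzS (Finset.mem_insert_of_mem h)⟩)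
          · rcases Finset.mem_insert.mp hzS with rfl | hzS'
            · exact Or.inl rfl
            · have hCx : ¬ z ≤ x ∧ ¬ x ≤ z :=
                ⟨(hxinc z (List.mem_toFinset.mp hzS')).2, (hxinc z (List.mem_toFinset.mp hzS')).1⟩
              exact Or.inr (Or.inr ⟨hzS', hzA, guard_mpr (Or.inr hCx) hzc⟩)
      · have hnac : ¬ IsAntichain (· ≤ ·) (↑(insert x (sweep L.toFinset A)) : Set α) := by
          intro hac
          apply hc
          intro a ha haS
          have haz : a ∈ sweep L.toFinset A := by
            rw [mem_sweep]; exact Or.inl ⟨ha, haS⟩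
          have hxa : x ≠ a := fun h => hxA (h ▸ ha)
          constructor
          · exact hac (by simp) (by simp [Finset.mem_coe.mpr haz]) hxa
          · exact hac (by simp [Finset.mem_coe.mpr haz]) (by simp) hxa.symm
        rw [if_neg hnac]
        ext z
        rw [mem_sweep, mem_sweep]
        constructor
        · rintro (⟨hzA, hzS⟩ | ⟨hzS, hzA, hzc⟩)
          · refine Or.inl ⟨hzA, fun h => ?_⟩
            rcases Finset.mem_insert.mp h with rfl | h'
            · exact hxA hzA
            · exact hzS h'
          · exact Or.inr ⟨Finset.mem_insert_of_mem hzS, hzA, guard_mp _ hzc⟩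
        · rintro (⟨hzA, hzS⟩ | ⟨hzS, hzA, hzc⟩)
          · exact Or.inl ⟨hzA, fun h => hzS (Finset.mem_insert_of_mem h)⟩
          · rcases Finset.mem_insert.mp hzS with rfl | hzS'
            · exact absurd (guard_mpr (Or.inl hxA) hzc) hc
            · have hCx : ¬ z ≤ x ∧ ¬ x ≤ z :=
                ⟨(hxinc z (List.mem_toFinset.mp hzS')).2, (hxinc z (List.mem_toFinset.mp hzS')).1⟩
              exact Or.inr ⟨hzS', hzA, guard_mpr (Or.inr hCx) hzc⟩

end Basics

section RankFacts

variable [Fintype α] [PartialOrder α] {rk : α → ℕ} (hrk : IsRankFunction rk)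

lemma exists_covby_between {x y : α} (hxy : x < y) : ∃ z, x ≤ z ∧ z ⋖ y := by
  classical
  have hne : (Finset.univ.filter (fun z => x ≤ z ∧ z < y)).Nonempty :=
    ⟨x, by simp [hxy]⟩
  obtain ⟨m, hm, hmax⟩ := Finset.exists_maximal hne
  simp only [Finset.mem_filter, Finset.mem_univ, true_and] at hm
  refine ⟨m, hm.1, hm.2, fun c hmc hcy => ?_⟩
  exact not_le_of_gt hmc (hmax (by simp [le_of_lt (lt_of_le_of_lt hm.1 hmc), hcy]) (le_of_lt hmc))

include hrk in
lemma rk_lt_of_lt : ∀ y x : α, x < y → rk x < rk y := by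
  have : WellFoundedLT α := Finite.to_wellFoundedLT
  intro y
  induction y using WellFoundedLT.induction with
  | _ y IH =>
    intro x hxy
    obtain ⟨z, hxz, hzy⟩ := exists_covby_between hxy
    have hrz : rk y = rk z + 1 := hrk.2 z y hzy
    rcases eq_or_lt_of_le hxz with rfl | hxz'
    · omega
    · have := IH z hzy.1 x hxz'
      omega

include hrk in
lemma incomp_of_rk_eq {x y : α} (hne : x ≠ y) (h : rk x = rk y) : ¬ x ≤ y := by
  intro hle
  have := rk_lt_of_lt hrk y x (lt_of_le_of_ne hle hne)
  omega

include hrk in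
lemma exists_rank_between {f : α} (a : α) :
    ∀ i, a ≤ f → rk a ≤ i → i ≤ rk f → ∃ x, a ≤ x ∧ x ≤ f ∧ rk x = i := by
  have : WellFoundedLT α := Finite.to_wellFoundedLT
  induction f using WellFoundedLT.induction with
  | _ f IH =>
    intro i haf hai hif
    rcases eq_or_lt_of_le hif with h | h
    · exact ⟨f, haf, le_refl f, h.symm⟩
    · have haf' : a < f := by
        rcases eq_or_lt_of_le haf with rfl | h' 
        · omega
        · exact h'
      obtain ⟨z, haz, hzf⟩ := exists_covby_between haf'
      have hrz : rk f = rk z + 1 := hrk.2 z f hzf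
      obtain ⟨x, h1, h2, h3⟩ := IH z hzf.1 i haz hai (by omega)
      exact ⟨x, h1, le_trans h2 (le_of_lt hzf.1), h3⟩

end RankFacts

section ClosedForm

variable [Fintype α] [PartialOrder α] {rk : α → ℕ} (hrk : IsRankFunction rk)

include hrk in
lemma rankToggleOn_eq_sweep (s : Set α) (i : ℕ) (A : Finset α)
    (hA : IsAntichain (· ≤ ·) (↑A : Set α)) :
    rankToggleOn s rk i A =
      sweep (Finset.univ.filter (fun q => q ∈ s ∧ rk q = i)) A := by
  set S := Finset.univ.filter (fun q => q ∈ s ∧ rk q = i) with hS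
  have h1 : S.toList.toFinset = S := Finset.toList_toFinset S
  have hrkmem : ∀ x ∈ S.toList, rk x = i := by
    intro x hx
    have : x ∈ S := by rw [← h1]; exact List.mem_toFinset.mpr hx
    simp only [hS, Finset.mem_filter] at this
    exact this.2.2
  have := foldr_toggle_eq S.toList (Finset.nodup_toList S)
    (fun x hx y hy hxy => incomp_of_rk_eq hrk hxy ((hrkmem x hx).trans (hrkmem y hy).symm))
    A hA
  rw [rankToggleOn, this, h1]

include hrk in
lemma rankToggleOn_antichain (s : Set α) (i : ℕ) (A : Finset α)
    (hA : IsAntichain (· ≤ ·) (↑A : Set α)) :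
    IsAntichain (· ≤ ·) (↑(rankToggleOn s rk i A) : Set α) := by
  rw [rankToggleOn_eq_sweep hrk s i A hA]
  refine sweep_antichain ?_ hA
  intro x hx y hy hxy
  simp only [Finset.mem_filter] at hx hy
  exact incomp_of_rk_eq hrk hxy (hx.2.2.trans hy.2.2.symm)

include hrk in
lemma rankToggleOn_mem_of_ne (s : Set α) (i : ℕ) (A : Finset α)
    (hA : IsAntichain (· ≤ ·) (↑A : Set α)) {z : α} (hz : rk z ≠ i) :
    z ∈ rankToggleOn s rk i A ↔ z ∈ A := by
  rw [rankToggleOn_eq_sweep hrk s i A hA, mem_sweep]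
  have hzS : z ∉ Finset.univ.filter (fun q => q ∈ s ∧ rk q = i) := by
    simp only [Finset.mem_filter]; tauto
  constructor
  · rintro (⟨h, _⟩ | ⟨h, _, _⟩)
    · exact h
    · exact absurd h hzS
  · intro h; exact Or.inl ⟨h, hzS⟩

include hrk in
lemma rankToggleOn_subset (s : Set α) (i : ℕ) (A : Finset α)
    (hA : IsAntichain (· ≤ ·) (↑A : Set α)) (hAs : ∀ a ∈ A, a ∈ s) :
    ∀ z ∈ rankToggleOn s rk i A, z ∈ s := by
  intro z hz
  rw [rankToggleOn_eq_sweep hrk s i A hA, mem_sweep] at hz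
  rcases hz with ⟨h, _⟩ | ⟨h, _, _⟩
  · exact hAs z h
  · simp only [Finset.mem_filter] at h; exact h.2.1

end ClosedForm

section StepLemmas

variable [Fintype α] [PartialOrder α] {rk : α → ℕ} {p : α}
variable (hrk : IsRankFunction rk) (hp : ∀ q : α, ¬ q < p)

lemma union_antichain {Y B : Finset α}
    (hY : IsAntichain (· ≤ ·) (↑Y : Set α)) (hB : IsAntichain (· ≤ ·) (↑B : Set α))
    (hYB : ∀ y ∈ Y, ∀ b ∈ B, ¬ y ≤ b ∧ ¬ b ≤ y) :
    IsAntichain (· ≤ ·) (↑(Y ∪ B) : Set α) := by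
  intro z hz w hw hzw hle
  simp only [Finset.coe_union, Set.mem_union, Finset.mem_coe] at hz hw
  rcases hz with hz | hz <;> rcases hw with hw | hw
  · exact hY (Finset.mem_coe.mpr hz) (Finset.mem_coe.mpr hw) hzw hle
  · exact (hYB z hz w hw).1 hle
  · exact (hYB w hw z hz).2 hle
  · exact hB (Finset.mem_coe.mpr hz) (Finset.mem_coe.mpr hw) hzw hle

include hrk hp in
lemma step_lemma (j : ℕ) (Y B : Finset α)
    (hY : IsAntichain (· ≤ ·) (↑Y : Set α)) (hYs : ∀ y ∈ Y, ¬ p ≤ y)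
    (hBF : ∀ b ∈ B, p ≤ b) (hBrk : ∀ b ∈ B, rk b < j)
    (hYB : ∀ y ∈ Y, ∀ b ∈ B, ¬ y ≤ b ∧ ¬ b ≤ y)
    (hBanti : IsAntichain (· ≤ ·) (↑B : Set α))
    (hcert : ∀ f, p ≤ f → rk f = j → ∃ z ∈ Y ∪ B, z < f) :
    rankToggleOn Set.univ rk j (Y ∪ B) =
      (rankToggleOn {q : α | ¬ p ≤ q} rk j Y) ∪ B := by
  have hYB' : IsAntichain (· ≤ ·) (↑(Y ∪ B) : Set α) := union_antichain hY hBanti hYB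
  rw [rankToggleOn_eq_sweep hrk _ j _ hYB', rankToggleOn_eq_sweep hrk _ j Y hY]
  ext z
  simp only [Finset.mem_union, mem_sweep, Finset.mem_filter, Finset.mem_univ,
    Set.mem_univ, true_and, Set.mem_setOf_eq]
  by_cases hzB : z ∈ B
  · exact iff_of_true (Or.inl ⟨Or.inr hzB, (hBrk z hzB).ne⟩) (Or.inr hzB)
  · by_cases hzY : z ∈ Y
    · have hpz : ¬ p ≤ z := hYs z hzY
      by_cases hzj : rk z = j
      · refine iff_of_false ?_ ?_
        · rintro (⟨_, h⟩ | ⟨_, h, _⟩)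
          · exact h hzj
          · exact h (Or.inl hzY)
        · rintro ((⟨_, h⟩ | ⟨_, h, _⟩) | h)
          · exact h ⟨hpz, hzj⟩
          · exact h hzY
          · exact hzB h
      · exact iff_of_true (Or.inl ⟨Or.inl hzY, hzj⟩)
          (Or.inl (Or.inl ⟨hzY, fun h => hzj h.2⟩))
    · by_cases hzj : rk z = j
      · by_cases hpz : p ≤ z
        · refine iff_of_false ?_ ?_
          · rintro (⟨h, hj⟩ | ⟨_, _, hcond⟩)
            · rcases h with h | h
              · exact hzY h
              · exact hzB h
            · obtain ⟨w, hw, hwz⟩ := hcert z hpz hzj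
              have hwj : rk w ≠ j := by
                have := rk_lt_of_lt hrk z w hwz; omega
              exact (hcond w (Finset.mem_union.mp hw) hwj).2 (le_of_lt hwz)
          · rintro ((⟨h, _⟩ | ⟨⟨h, _⟩, _, _⟩) | h)
            · exact hzY h
            · exact h hpz
            · exact hzB h
        · constructor
          · rintro (⟨h, hj⟩ | ⟨_, _, hcond⟩)
            · exact absurd hzj hj
            · refine Or.inl (Or.inr ⟨⟨hpz, hzj⟩, hzY, ?_⟩)
              intro a ha hga
              have hpa : ¬ p ≤ a := hYs a ha
              have haj : rk a ≠ j := fun h => hga ⟨hpa, h⟩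
              exact hcond a (Or.inl ha) haj
          · rintro ((⟨h, _⟩ | ⟨_, _, hcond⟩) | h)
            · exact absurd h hzY
            · refine Or.inr ⟨hzj, fun h => ?_, ?_⟩
              · rcases h with h | h
                · exact hzY h
                · exact hzB h
              · rintro a (ha | ha) haj
                · exact hcond a ha (fun hh => haj hh.2)
                · constructor
                  · intro hza
                    have hza' : z < a := lt_of_le_of_ne hza (fun h => hzB (h ▸ ha))
                    have := rk_lt_of_lt hrk a z hza'
                    have := hBrk a ha
                    omega
                  · intro haz
                    exact hpz (le_trans (hBF a ha) haz)
            · exact absurd h hzB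
      · refine iff_of_false ?_ ?_
        · rintro (⟨h, _⟩ | ⟨h, _, _⟩)
          · rcases h with h | h
            · exact hzY h
            · exact hzB h
          · exact hzj h
        · rintro ((⟨h, _⟩ | ⟨⟨_, h⟩, _, _⟩) | h)
          · exact hzY h
          · exact hzj h
          · exact hzB h

include hrk hp in
lemma removal_lemma (j : ℕ) (Y B : Finset α)
    (hY : IsAntichain (· ≤ ·) (↑Y : Set α)) (hYs : ∀ y ∈ Y, ¬ p ≤ y)
    (hBF : ∀ b ∈ B, p ≤ b) (hBrk : ∀ b ∈ B, rk b = j)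
    (hYB : ∀ y ∈ Y, ∀ b ∈ B, ¬ y ≤ b ∧ ¬ b ≤ y)
    (hBanti : IsAntichain (· ≤ ·) (↑B : Set α))
    (hcert : ∀ f, p ≤ f → rk f = j → f ∉ B → ∃ y ∈ Y, y < f) :
    rankToggleOn Set.univ rk j (Y ∪ B) = rankToggleOn {q : α | ¬ p ≤ q} rk j Y := by
  have hYB' : IsAntichain (· ≤ ·) (↑(Y ∪ B) : Set α) := union_antichain hY hBanti hYB
  rw [rankToggleOn_eq_sweep hrk _ j _ hYB', rankToggleOn_eq_sweep hrk _ j Y hY]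
  ext z
  simp only [Finset.mem_union, mem_sweep, Finset.mem_filter, Finset.mem_univ,
    Set.mem_univ, true_and, Set.mem_setOf_eq]
  by_cases hzB : z ∈ B
  · have hzj : rk z = j := hBrk z hzB
    have hpz : p ≤ z := hBF z hzB
    have hzY : z ∉ Y := fun h => (hYs z h) hpz
    refine iff_of_false ?_ ?_
    · rintro (⟨_, h⟩ | ⟨_, h, _⟩)
      · exact h hzj
      · exact h (Or.inr hzB)
    · rintro (⟨h, _⟩ | ⟨⟨h, _⟩, _, _⟩)
      · exact hzY h
      · exact h hpz
  · by_cases hzY : z ∈ Y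
    · have hpz : ¬ p ≤ z := hYs z hzY
      by_cases hzj : rk z = j
      · refine iff_of_false ?_ ?_
        · rintro (⟨_, h⟩ | ⟨_, h, _⟩)
          · exact h hzj
          · exact h (Or.inl hzY)
        · rintro (⟨_, h⟩ | ⟨_, h, _⟩)
          · exact h ⟨hpz, hzj⟩
          · exact h hzY
      · exact iff_of_true (Or.inl ⟨Or.inl hzY, hzj⟩)
          (Or.inl ⟨hzY, fun h => hzj h.2⟩)
    · by_cases hzj : rk z = j
      · by_cases hpz : p ≤ z
        · refine iff_of_false ?_ ?_
          · rintro (⟨h, hj⟩ | ⟨_, _, hcond⟩)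
            · rcases h with h | h
              · exact hzY h
              · exact hzB h
            · obtain ⟨w, hw, hwz⟩ := hcert z hpz hzj hzB
              have hwj : rk w ≠ j := by
                have := rk_lt_of_lt hrk z w hwz; omega
              exact (hcond w (Or.inl hw) hwj).2 (le_of_lt hwz)
          · rintro (⟨h, _⟩ | ⟨⟨h, _⟩, _, _⟩)
            · exact hzY h
            · exact h hpz
        · constructor
          · rintro (⟨h, hj⟩ | ⟨_, _, hcond⟩)
            · exact absurd hzj hj
            · refine Or.inr ⟨⟨hpz, hzj⟩, hzY, ?_⟩
              intro a ha hga
              have hpa : ¬ p ≤ a := hYs a ha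
              have haj : rk a ≠ j := fun h => hga ⟨hpa, h⟩
              exact hcond a (Or.inl ha) haj
          · rintro (⟨h, _⟩ | ⟨_, _, hcond⟩)
            · exact absurd h hzY
            · refine Or.inr ⟨hzj, fun h => ?_, ?_⟩
              · rcases h with h | h
                · exact hzY h
                · exact hzB h
              · rintro a (ha | ha) haj
                · exact hcond a ha (fun hh => haj hh.2)
                · exact absurd (hBrk a ha) haj
      · refine iff_of_false ?_ ?_
        · rintro (⟨h, _⟩ | ⟨h, _, _⟩)
          · rcases h with h | h
            · exact hzY h
            · exact hzB h
          · exact hzj h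
        · rintro (⟨h, _⟩ | ⟨⟨_, h⟩, _, _⟩)
          · exact hzY h
          · exact hzj h

include hrk hp in
lemma insert_lemma (j : ℕ) (Y : Finset α)
    (hY : IsAntichain (· ≤ ·) (↑Y : Set α)) (hYs : ∀ y ∈ Y, ¬ p ≤ y) :
    rankToggleOn Set.univ rk j Y =
      (rankToggleOn {q : α | ¬ p ≤ q} rk j Y) ∪
        (Finset.univ.filter (fun f => p ≤ f ∧ rk f = j ∧ ∀ y ∈ Y, ¬ y < f)) := by
  rw [rankToggleOn_eq_sweep hrk _ j Y hY, rankToggleOn_eq_sweep hrk _ j Y hY]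
  ext z
  simp only [Finset.mem_union, mem_sweep, Finset.mem_filter, Finset.mem_univ,
    Set.mem_univ, true_and, Set.mem_setOf_eq]
  by_cases hzY : z ∈ Y
  · have hpz : ¬ p ≤ z := hYs z hzY
    by_cases hzj : rk z = j
    · refine iff_of_false ?_ ?_
      · rintro (⟨_, h⟩ | ⟨_, h, _⟩)
        · exact h hzj
        · exact h hzY
      · rintro ((⟨_, h⟩ | ⟨_, h, _⟩) | ⟨h, _, _⟩)
        · exact h ⟨hpz, hzj⟩
        · exact h hzY
        · exact hpz h
    · exact iff_of_true (Or.inl ⟨hzY, hzj⟩)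
        (Or.inl (Or.inl ⟨hzY, fun h => hzj h.2⟩))
  · by_cases hzj : rk z = j
    · by_cases hpz : p ≤ z
      · -- z is an F element of rank j : LHS condition ↔ membership in new B
        constructor
        · rintro (⟨h, _⟩ | ⟨_, _, hcond⟩)
          · exact absurd h hzY
          · refine Or.inr ⟨hpz, hzj, ?_⟩
            intro y hy hylt
            have hyj : rk y ≠ j := by
              have := rk_lt_of_lt hrk z y hylt; omega
            exact (hcond y hy hyj).2 (le_of_lt hylt)
        · rintro ((⟨h, _⟩ | ⟨⟨h, _⟩, _, _⟩) | ⟨_, _, hnlt⟩)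
          · exact absurd h hzY
          · exact absurd hpz h
          · refine Or.inr ⟨hzj, hzY, ?_⟩
            intro a ha haj
            constructor
            · intro hza
              have hne : z ≠ a := fun h => (hYs a ha) (h ▸ hpz)
              have : p ≤ a := le_trans hpz (le_of_lt (lt_of_le_of_ne hza hne))
              exact (hYs a ha) this
            · intro haz
              have hne : a ≠ z := fun h => (hYs a ha) (h ▸ hpz)
              exact hnlt a ha (lt_of_le_of_ne haz hne)
      · constructor
        · rintro (⟨h, _⟩ | ⟨_, _, hcond⟩)
          · exact absurd h hzY
          · refine Or.inl (Or.inr ⟨⟨hpz, hzj⟩, hzY, ?_⟩)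
            intro a ha hga
            have haj : rk a ≠ j := fun h => hga ⟨hYs a ha, h⟩
            exact hcond a ha haj
        · rintro ((⟨h, _⟩ | ⟨_, _, hcond⟩) | ⟨h, _, _⟩)
          · exact absurd h hzY
          · refine Or.inr ⟨hzj, hzY, ?_⟩
            intro a ha haj
            exact hcond a ha (fun hh => haj hh.2)
          · exact absurd h hpz
    · refine iff_of_false ?_ ?_
      · rintro (⟨h, _⟩ | ⟨h, _, _⟩)
        · exact hzY h
        · exact hzj h
      · rintro ((⟨h, _⟩ | ⟨⟨_, h⟩, _, _⟩) | ⟨_, h, _⟩)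
        · exact hzY h
        · exact hzj h
        · exact hzj h

end StepLemmas

noncomputable def rfold [Fintype α] [PartialOrder α] (s : Set α) (rk : α → ℕ)
    (js : List ℕ) (A : Finset α) : Finset α :=
  js.foldl (fun C j => rankToggleOn s rk j C) A

noncomputable def bfold [Fintype α] [PartialOrder α] (s : Set α) (rk : α → ℕ)
    (N : ℕ) (ks : List ℕ) (A : Finset α) : Finset α :=
  ks.foldl (fun C k => rfold s rk (List.range' k (N + 1 - k)) C) A

section Folds

variable [Fintype α] [PartialOrder α] {rk : α → ℕ} {p : α}
variable (hrk : IsRankFunction rk) (hp : ∀ q : α, ¬ q < p)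

lemma rvacOn_eq_bfold (s : Set α) (N : ℕ) (A : Finset α) :
    rvacOn s rk N A = bfold s rk N (List.range (N + 1)) A := rfl

@[simp] lemma rfold_nil (s : Set α) (A : Finset α) : rfold s rk [] A = A := rfl

lemma rfold_cons (s : Set α) (j : ℕ) (js : List ℕ) (A : Finset α) :
    rfold s rk (j :: js) A = rfold s rk js (rankToggleOn s rk j A) := rfl

@[simp] lemma bfold_nil (s : Set α) (N : ℕ) (A : Finset α) : bfold s rk N [] A = A := rfl

lemma bfold_cons (s : Set α) (N k : ℕ) (ks : List ℕ) (A : Finset α) :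
    bfold s rk N (k :: ks) A = bfold s rk N ks (rfold s rk (List.range' k (N + 1 - k)) A) := rfl

include hrk in
lemma rfold_pres (js : List ℕ) :
    ∀ (Y : Finset α), IsAntichain (· ≤ ·) (↑Y : Set α) → (∀ y ∈ Y, ¬ p ≤ y) →
      IsAntichain (· ≤ ·) (↑(rfold {q : α | ¬ p ≤ q} rk js Y) : Set α) ∧
        (∀ y ∈ rfold {q : α | ¬ p ≤ q} rk js Y, ¬ p ≤ y) := by
  induction js with
  | nil => intro Y h1 h2; exact ⟨h1, h2⟩
  | cons j js ih =>
    intro Y h1 h2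
    rw [rfold_cons]
    refine ih _ (rankToggleOn_antichain hrk _ j Y h1) ?_
    intro y hy
    exact rankToggleOn_subset hrk {q : α | ¬ p ≤ q} j Y h1 h2 y hy

include hrk in
lemma rfold_frozen (js : List ℕ) :
    ∀ (Y : Finset α), IsAntichain (· ≤ ·) (↑Y : Set α) → (∀ y ∈ Y, ¬ p ≤ y) →
      ∀ x, (∀ j ∈ js, rk x ≠ j) →
        (x ∈ rfold {q : α | ¬ p ≤ q} rk js Y ↔ x ∈ Y) := by
  induction js with
  | nil => intro Y _ _ x _; rfl
  | cons j js ih =>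
    intro Y h1 h2 x hx
    rw [rfold_cons]
    have h1' := rankToggleOn_antichain hrk {q : α | ¬ p ≤ q} j Y h1
    have h2' := rankToggleOn_subset hrk {q : α | ¬ p ≤ q} j Y h1 h2
    rw [ih _ h1' h2' x (fun i hi => hx i (List.mem_cons_of_mem _ hi))]
    exact rankToggleOn_mem_of_ne hrk _ j Y h1 (hx j (List.mem_cons_self))

include hrk hp in
lemma inner_aux (k : ℕ) (Y₁ : Finset α)
    (hY₁ : IsAntichain (· ≤ ·) (↑Y₁ : Set α)) (hY₁s : ∀ y ∈ Y₁, ¬ p ≤ y) :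
    ∀ (n m : ℕ), k + 2 ≤ m → ∀ (Z : Finset α),
      IsAntichain (· ≤ ·) (↑Z : Set α) → (∀ z ∈ Z, ¬ p ≤ z) →
      (∀ x, rk x ≤ k → (x ∈ Z ↔ x ∈ Y₁)) →
      rfold Set.univ rk (List.range' m n)
        (Z ∪ Finset.univ.filter (fun f => p ≤ f ∧ rk f = k + 1 ∧ ∀ y ∈ Y₁, ¬ y < f)) =
      rfold {q : α | ¬ p ≤ q} rk (List.range' m n) Z ∪
        Finset.univ.filter (fun f => p ≤ f ∧ rk f = k + 1 ∧ ∀ y ∈ Y₁, ¬ y < f) := by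
  set B₁ := Finset.univ.filter (fun f => p ≤ f ∧ rk f = k + 1 ∧ ∀ y ∈ Y₁, ¬ y < f) with hB₁
  have hB₁mem : ∀ b, b ∈ B₁ ↔ (p ≤ b ∧ rk b = k + 1 ∧ ∀ y ∈ Y₁, ¬ y < b) := by
    intro b; simp [hB₁]
  have hp0 : rk p = 0 := hrk.1 p hp
  intro n
  induction n with
  | zero => intro m _ Z _ _ _; rfl
  | succ n ih =>
    intro m hm Z hZ hZs hfro
    have hstep : rankToggleOn Set.univ rk m (Z ∪ B₁) =
        (rankToggleOn {q : α | ¬ p ≤ q} rk m Z) ∪ B₁ := by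
      refine step_lemma hrk hp m Z B₁ hZ hZs ?_ ?_ ?_ ?_ ?_
      · intro b hb; exact ((hB₁mem b).mp hb).1
      · intro b hb; have := ((hB₁mem b).mp hb).2.1; omega
      · intro y hy b hb
        obtain ⟨hpb, hrb, hnb⟩ := (hB₁mem b).mp hb
        constructor
        · intro hyb
          have hyne : y ≠ b := fun h => (hZs y hy) (h ▸ hpb)
          have hylt : y < b := lt_of_le_of_ne hyb hyne
          have := rk_lt_of_lt hrk b y hylt
          have hy1 : y ∈ Y₁ := (hfro y (by omega)).mp hy
          exact hnb y hy1 hylt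
        · intro hby
          exact (hZs y hy) (le_trans hpb hby)
      · intro a ha b hb hab
        exact incomp_of_rk_eq hrk hab
          (((hB₁mem a).mp ha).2.1.trans ((hB₁mem b).mp hb).2.1.symm)
      · intro f hpf hrf
        obtain ⟨x, hpx, hxf, hrx⟩ := exists_rank_between hrk p (k+1) hpf (by omega) (by omega)
        have hxlt : x < f := lt_of_le_of_ne hxf (fun h => by rw [h] at hrx; omega)
        by_cases hx : ∀ y ∈ Y₁, ¬ y < x
        · exact ⟨x, Finset.mem_union_right _ ((hB₁mem x).mpr ⟨hpx, hrx, hx⟩), hxlt⟩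
        · push_neg at hx
          obtain ⟨y, hy, hyx⟩ := hx
          have := rk_lt_of_lt hrk x y hyx
          have hyZ : y ∈ Z := (hfro y (by omega)).mpr hy
          exact ⟨y, Finset.mem_union_left _ hyZ, lt_trans hyx hxlt⟩
    have : List.range' m (n + 1) = m :: List.range' (m + 1) n := rfl
    rw [this, rfold_cons, rfold_cons, hstep]
    have hZ' := rankToggleOn_antichain hrk {q : α | ¬ p ≤ q} m Z hZ
    have hZs' := rankToggleOn_subset hrk {q : α | ¬ p ≤ q} m Z hZ hZs
    refine ih (m + 1) (by omega) _ hZ' hZs' ?_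
    intro x hx
    rw [rankToggleOn_mem_of_ne hrk _ m Z hZ (by omega)]
    exact hfro x hx

end Folds

section Outer

variable [Fintype α] [PartialOrder α] {rk : α → ℕ} {p : α} {N : ℕ}
variable (hrk : IsRankFunction rk) (hp : ∀ q : α, ¬ q < p)
variable (hN : ∀ q : α, rk q ≤ N)

include hrk hp hN in
lemma outer2 : ∀ (n k : ℕ), k + n = N + 1 → ∀ (Y B : Finset α),
    IsAntichain (· ≤ ·) (↑Y : Set α) → (∀ y ∈ Y, ¬ p ≤ y) →
    (∀ b ∈ B, p ≤ b ∧ rk b = k) →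
    IsAntichain (· ≤ ·) (↑B : Set α) →
    (∀ y ∈ Y, ∀ b ∈ B, ¬ y ≤ b ∧ ¬ b ≤ y) →
    (∀ f, p ≤ f → rk f = k → f ∉ B → ∃ y ∈ Y, y < f) →
    bfold Set.univ rk N (List.range' k n) (Y ∪ B) =
      bfold {q : α | ¬ p ≤ q} rk N (List.range' k n) Y := by
  have hp0 : rk p = 0 := hrk.1 p hp
  intro n
  induction n with
  | zero =>
    intro k hk Y B _ _ hB _ _ _
    have hBempty : B = ∅ := by
      rw [Finset.eq_empty_iff_forall_notMem]
      intro b hb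
      have h1 := (hB b hb).2
      have h2 := hN b
      omega
    rw [hBempty, Finset.union_empty]
    rfl
  | succ n ih =>
    intro k hk Y B hY hYs hB hBanti hYB hcert
    have hkN : k ≤ N := by omega
    set s' : Set α := {q : α | ¬ p ≤ q} with hs'
    set Y₁ := rankToggleOn s' rk k Y with hY₁def
    set B₁ := Finset.univ.filter (fun f => p ≤ f ∧ rk f = k + 1 ∧ ∀ y ∈ Y₁, ¬ y < f) with hB₁
    have hB₁mem : ∀ b, b ∈ B₁ ↔ (p ≤ b ∧ rk b = k + 1 ∧ ∀ y ∈ Y₁, ¬ y < b) := by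
      intro b; simp [hB₁]
    have hY₁anti : IsAntichain (· ≤ ·) (↑Y₁ : Set α) :=
      rankToggleOn_antichain hrk s' k Y hY
    have hY₁s : ∀ y ∈ Y₁, ¬ p ≤ y := rankToggleOn_subset hrk s' k Y hY hYs
    -- the first toggle of the block : removal
    have hrem : rankToggleOn Set.univ rk k (Y ∪ B) = Y₁ := by
      refine removal_lemma hrk hp k Y B hY hYs (fun b hb => (hB b hb).1)
        (fun b hb => (hB b hb).2) hYB hBanti hcert
    -- whole block
    have hblock : rfold Set.univ rk (List.range' k (N + 1 - k)) (Y ∪ B) =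
        rfold s' rk (List.range' k (N + 1 - k)) Y ∪ B₁ := by
      have harith : N + 1 - k = (N - k) + 1 := by omega
      rw [harith]
      have : List.range' k (N - k + 1) = k :: List.range' (k + 1) (N - k) := rfl
      rw [this, rfold_cons, rfold_cons, hrem, ← hY₁def]
      rcases Nat.eq_zero_or_pos (N - k) with h0 | hpos
      · rw [h0]
        have hB₁empty : B₁ = ∅ := by
          rw [Finset.eq_empty_iff_forall_notMem]
          intro b hb
          have h1 := ((hB₁mem b).mp hb).2.1
          have h2 := hN b
          omega
        rw [hB₁empty, Finset.union_empty]
        rfl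
      · have harith2 : N - k = (N - k - 1) + 1 := by omega
        rw [harith2]
        have : List.range' (k + 1) (N - k - 1 + 1) = (k + 1) :: List.range' (k + 2) (N - k - 1) := rfl
        rw [this, rfold_cons, rfold_cons]
        have hins : rankToggleOn Set.univ rk (k + 1) Y₁ =
            (rankToggleOn s' rk (k + 1) Y₁) ∪ B₁ := by
          rw [hB₁]
          exact insert_lemma hrk hp (k + 1) Y₁ hY₁anti hY₁s
        rw [hins]
        set Y₂ := rankToggleOn s' rk (k + 1) Y₁ with hY₂def
        have hY₂anti : IsAntichain (· ≤ ·) (↑Y₂ : Set α) :=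
          rankToggleOn_antichain hrk s' (k + 1) Y₁ hY₁anti
        have hY₂s : ∀ y ∈ Y₂, ¬ p ≤ y := rankToggleOn_subset hrk s' (k + 1) Y₁ hY₁anti hY₁s
        refine inner_aux hrk hp k Y₁ hY₁anti hY₁s (N - k - 1) (k + 2) (by omega) Y₂ hY₂anti hY₂s ?_
        intro x hx
        exact rankToggleOn_mem_of_ne hrk s' (k + 1) Y₁ hY₁anti (by omega)
    -- set up next invariants
    set Yend := rfold s' rk (List.range' k (N + 1 - k)) Y with hYend
    have hYendpres := rfold_pres hrk (List.range' k (N + 1 - k)) Y hY hYs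
    have hfroYend : ∀ x, rk x ≤ k → (x ∈ Yend ↔ x ∈ Y₁) := by
      intro x hx
      have harith : N + 1 - k = (N - k) + 1 := by omega
      have hsplit : List.range' k (N + 1 - k) = k :: List.range' (k + 1) (N - k) := by
        rw [harith]; rfl
      rw [hYend, hsplit, rfold_cons, ← hY₁def]
      refine rfold_frozen hrk _ Y₁ hY₁anti hY₁s x ?_
      intro j hj
      have := (List.mem_range'_1.mp hj).1
      omega
    have hnext : bfold Set.univ rk N (List.range' (k + 1) n) (Yend ∪ B₁) =
        bfold s' rk N (List.range' (k + 1) n) Yend := by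
      refine ih (k + 1) (by omega) Yend B₁ hYendpres.1 hYendpres.2 ?_ ?_ ?_ ?_
      · intro b hb
        exact ⟨((hB₁mem b).mp hb).1, ((hB₁mem b).mp hb).2.1⟩
      · intro a ha b hb hab
        exact incomp_of_rk_eq hrk hab
          (((hB₁mem a).mp ha).2.1.trans ((hB₁mem b).mp hb).2.1.symm)
      · intro y hy b hb
        obtain ⟨hpb, hrb, hnb⟩ := (hB₁mem b).mp hb
        constructor
        · intro hyb
          have hyne : y ≠ b := fun h => (hYendpres.2 y hy) (h ▸ hpb)
          have hylt : y < b := lt_of_le_of_ne hyb hyne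
          have := rk_lt_of_lt hrk b y hylt
          have hy1 : y ∈ Y₁ := (hfroYend y (by omega)).mp hy
          exact hnb y hy1 hylt
        · intro hby
          exact (hYendpres.2 y hy) (le_trans hpb hby)
      · intro f hpf hrf hfB
        have : ¬ ∀ y ∈ Y₁, ¬ y < f := fun h => hfB ((hB₁mem f).mpr ⟨hpf, hrf, h⟩)
        push_neg at this
        obtain ⟨y, hy, hyf⟩ := this
        have := rk_lt_of_lt hrk f y hyf
        exact ⟨y, (hfroYend y (by omega)).mpr hy, hyf⟩
    have hsplit : List.range' k (n + 1) = k :: List.range' (k + 1) n := rfl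
    rw [hsplit, bfold_cons, bfold_cons, hblock, ← hYend, hnext]

end Outer

section CaseOne

variable [Fintype α] [PartialOrder α] {rk : α → ℕ} {p : α} {N : ℕ}
variable (hrk : IsRankFunction rk) (hp : ∀ q : α, ¬ q < p)

lemma singleton_antichain (x : α) : IsAntichain (· ≤ ·) (↑({x} : Finset α) : Set α) := by
  intro a ha b hb hab
  simp only [Finset.coe_singleton, Set.mem_singleton_iff] at ha hb
  exact absurd (ha.trans hb.symm) hab

include hrk hp in
lemma inner1 (js : List ℕ) :
    ∀ (Y : Finset α), (∀ j ∈ js, 1 ≤ j) →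
      IsAntichain (· ≤ ·) (↑Y : Set α) → (∀ y ∈ Y, ¬ p ≤ y) →
      rfold Set.univ rk js (Y ∪ {p}) = rfold {q : α | ¬ p ≤ q} rk js Y ∪ {p} := by
  have hp0 : rk p = 0 := hrk.1 p hp
  induction js with
  | nil => intro Y _ _ _; rfl
  | cons j js ih =>
    intro Y hjs hY hYs
    have hj1 : 1 ≤ j := hjs j (List.mem_cons_self)
    have hstep : rankToggleOn Set.univ rk j (Y ∪ {p}) =
        (rankToggleOn {q : α | ¬ p ≤ q} rk j Y) ∪ {p} := by
      refine step_lemma hrk hp j Y {p} hY hYs ?_ ?_ ?_ (singleton_antichain p) ?_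
      · intro b hb; rw [Finset.mem_singleton] at hb; exact hb ▸ le_refl p
      · intro b hb; rw [Finset.mem_singleton] at hb; rw [hb]; omega
      · intro y hy b hb
        rw [Finset.mem_singleton] at hb
        rw [hb]
        constructor
        · intro hyb
          have hyne : y ≠ p := fun h => (hYs y hy) (h ▸ le_refl p)
          exact hp y (lt_of_le_of_ne hyb hyne)
        · exact hYs y hy
      · intro f hpf hrf
        have hfp : f ≠ p := fun h => by rw [h] at hrf; omega
        exact ⟨p, Finset.mem_union_right _ (Finset.mem_singleton_self p),
          lt_of_le_of_ne hpf (Ne.symm hfp)⟩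
    rw [rfold_cons, rfold_cons, hstep]
    exact ih _ (fun i hi => hjs i (List.mem_cons_of_mem _ hi))
      (rankToggleOn_antichain hrk _ j Y hY)
      (rankToggleOn_subset hrk _ j Y hY hYs)

include hrk hp in
lemma outer1 (ks : List ℕ) :
    ∀ (Y : Finset α), (∀ k ∈ ks, 1 ≤ k) →
      IsAntichain (· ≤ ·) (↑Y : Set α) → (∀ y ∈ Y, ¬ p ≤ y) →
      bfold Set.univ rk N ks (Y ∪ {p}) = bfold {q : α | ¬ p ≤ q} rk N ks Y ∪ {p} := by
  induction ks with
  | nil => intro Y _ _ _; rfl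
  | cons k ks ih =>
    intro Y hks hY hYs
    rw [bfold_cons, bfold_cons]
    have hblock : rfold Set.univ rk (List.range' k (N + 1 - k)) (Y ∪ {p}) =
        rfold {q : α | ¬ p ≤ q} rk (List.range' k (N + 1 - k)) Y ∪ {p} := by
      refine inner1 hrk hp _ Y ?_ hY hYs
      intro j hj
      have := (List.mem_range'_1.mp hj).1
      have := hks k (List.mem_cons_self)
      omega
    rw [hblock]
    have hpres := rfold_pres hrk (List.range' k (N + 1 - k)) Y hY hYs
    exact ih _ (fun i hi => hks i (List.mem_cons_of_mem _ hi)) hpres.1 hpres.2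

end CaseOne

section Bridge

variable [Fintype α] [PartialOrder α] {rk : α → ℕ} {p : α}

lemma rankToggleOn_id_of_big {Np j : ℕ}
    (hNp : ∀ q : α, ¬ p ≤ q → rk q ≤ Np) (hj : Np < j) (C : Finset α) :
    rankToggleOn {q : α | ¬ p ≤ q} rk j C = C := by
  have hgen : ∀ (S : Finset α), (∀ x, x ∉ S) → S.toList.foldr toggle C = C := by
    intro S hS
    have : S = ∅ := Finset.eq_empty_iff_forall_notMem.mpr (fun x hx => hS x hx)
    subst this
    simp
  rw [rankToggleOn]
  refine hgen _ ?_
  intro x hx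
  simp only [Finset.mem_filter, Finset.mem_univ, true_and, Set.mem_setOf_eq] at hx
  have := hNp x hx.1
  omega

lemma rfold_id_of_big {Np : ℕ} (hNp : ∀ q : α, ¬ p ≤ q → rk q ≤ Np)
    (js : List ℕ) (hjs : ∀ j ∈ js, Np < j) (C : Finset α) :
    rfold {q : α | ¬ p ≤ q} rk js C = C := by
  induction js generalizing C with
  | nil => rfl
  | cons j js ih =>
    rw [rfold_cons, rankToggleOn_id_of_big hNp (hjs j (List.mem_cons_self)) C]
    exact ih (fun i hi => hjs i (List.mem_cons_of_mem _ hi)) C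

lemma bridge {N Np : ℕ} (hNp : ∀ q : α, ¬ p ≤ q → rk q ≤ Np) (hNpN : Np ≤ N)
    (D : Finset α) :
    rvacOn {q : α | ¬ p ≤ q} rk N D = rvacOn {q : α | ¬ p ≤ q} rk Np D := by
  set s' : Set α := {q : α | ¬ p ≤ q} with hs'
  have hblockeq : ∀ k, k ≤ Np → ∀ C : Finset α,
      rfold s' rk (List.range' k (N + 1 - k)) C = rfold s' rk (List.range' k (Np + 1 - k)) C := by
    intro k hk C
    have hsplit : List.range' k (Np + 1 - k) ++ List.range' (Np + 1) (N - Np) =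
        List.range' k (N + 1 - k) := by
      have := List.range'_append (s := k) (m := Np + 1 - k) (n := N - Np) (step := 1)
      simp only [one_mul] at this
      have h1 : k + (Np + 1 - k) = Np + 1 := by omega
      have h2 : Np + 1 - k + (N - Np) = N + 1 - k := by omega
      rw [h1, h2] at this
      exact this
    rw [← hsplit, rfold, List.foldl_append]
    rw [← rfold, ← rfold]
    rw [rfold_id_of_big hNp _ (fun j hj => by
      have := (List.mem_range'_1.mp hj).1; omega)]
  have hbig : ∀ (ks : List ℕ), (∀ k ∈ ks, Np < k) → ∀ C : Finset α,
      bfold s' rk N ks C = C := by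
    intro ks
    induction ks with
    | nil => intro _ C; rfl
    | cons k ks ih =>
      intro hks C
      rw [bfold_cons]
      rw [rfold_id_of_big hNp _ (fun j hj => by
        have := (List.mem_range'_1.mp hj).1
        have := hks k (List.mem_cons_self)
        omega)]
      exact ih (fun i hi => hks i (List.mem_cons_of_mem _ hi)) C
  have hsame : ∀ (ks : List ℕ), (∀ k ∈ ks, k ≤ Np) → ∀ C : Finset α,
      bfold s' rk N ks C = bfold s' rk Np ks C := by
    intro ks
    induction ks with
    | nil => intro _ C; rfl
    | cons k ks ih =>
      intro hks C
      rw [bfold_cons, bfold_cons, hblockeq k (hks k (List.mem_cons_self)) C]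
      exact ih (fun i hi => hks i (List.mem_cons_of_mem _ hi)) _
  rw [rvacOn_eq_bfold, rvacOn_eq_bfold]
  have hsplit : List.range (N + 1) = List.range (Np + 1) ++ List.range' (Np + 1) (N - Np) := by
    rw [List.range_eq_range', List.range_eq_range']
    have := List.range'_append (s := 0) (m := Np + 1) (n := N - Np) (step := 1)
    simp only [one_mul, zero_add] at this
    rw [this]
    congr 1
    omega
  rw [hsplit, bfold, List.foldl_append, ← bfold, ← bfold]
  rw [hbig _ (fun k hk => by have := (List.mem_range'_1.mp hk).1; omega)]
  exact hsame _ (fun k hk => by have := List.mem_range.mp hk; omega) D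

end Bridge

/-- Rowvacuation and parabolic induction: `P' = {q : q ≱ p}` for a minimal
element `p`.  `rvacOn Set.univ` is rowvacuation of `P`; `rvacOn {q | ¬ p ≤ q}`
is rowvacuation of the subposet `P'` (whose rank function is the restriction of
`rk`, and whose rank is the max of `rk` over `P'`). -/
theorem rvac_parabolic [Fintype α] [PartialOrder α] (rk : α → ℕ)
    (hrk : IsRankFunction rk) (p : α) (hp : ∀ q : α, ¬ q < p)
    (A : Finset α) (hA : IsAntichain (· ≤ ·) (↑A : Set α)) :
    ((↑A : Set α) ⊆ {q : α | ¬ p ≤ q} →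
      rvacOn Set.univ rk (Finset.univ.sup rk) A =
        insert p (rvacOn {q : α | ¬ p ≤ q} rk
          ((Finset.univ.filter (fun q : α => ¬ p ≤ q)).sup rk) A)) ∧
    (p ∈ A →
      rvacOn Set.univ rk (Finset.univ.sup rk) A =
        rvacOn {q : α | ¬ p ≤ q} rk
          ((Finset.univ.filter (fun q : α => ¬ p ≤ q)).sup rk) (A.erase p)) := by
  set N := Finset.univ.sup rk with hNdef
  set Np := (Finset.univ.filter (fun q : α => ¬ p ≤ q)).sup rk with hNpdef
  set s' : Set α := {q : α | ¬ p ≤ q} with hs'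
  have hN : ∀ q : α, rk q ≤ N := fun q => Finset.le_sup (Finset.mem_univ q)
  have hNp : ∀ q : α, ¬ p ≤ q → rk q ≤ Np := fun q h =>
    Finset.le_sup (Finset.mem_filter.mpr ⟨Finset.mem_univ q, h⟩)
  have hNpN : Np ≤ N := Finset.sup_mono (Finset.filter_subset _ _)
  have hp0 : rk p = 0 := hrk.1 p hp
  have hrange : List.range (N + 1) = 0 :: List.range' 1 N := by
    rw [List.range_eq_range']; rfl
  constructor
  · -- Case 1
    intro hA1
    have hYs : ∀ y ∈ A, ¬ p ≤ y := fun y hy => hA1 (Finset.mem_coe.mpr hy)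
    set Y₀ := rankToggleOn s' rk 0 A with hY₀def
    have hY₀anti : IsAntichain (· ≤ ·) (↑Y₀ : Set α) := rankToggleOn_antichain hrk s' 0 A hA
    have hY₀s : ∀ y ∈ Y₀, ¬ p ≤ y := rankToggleOn_subset hrk s' 0 A hA hYs
    have hB₀ : (Finset.univ.filter (fun f => p ≤ f ∧ rk f = 0 ∧ ∀ y ∈ A, ¬ y < f)) = {p} := by
      ext f
      simp only [Finset.mem_filter, Finset.mem_univ, true_and, Finset.mem_singleton]
      constructor
      · rintro ⟨hpf, hrf, _⟩
        by_contra hfp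
        have := rk_lt_of_lt hrk f p (lt_of_le_of_ne hpf (Ne.symm hfp))
        omega
      · intro hf
        rw [hf]
        exact ⟨le_refl p, hp0, fun y _ h => hp y h⟩
    have hins : rankToggleOn Set.univ rk 0 A = Y₀ ∪ {p} := by
      rw [hY₀def, ← hB₀]
      exact insert_lemma hrk hp 0 A hA hYs
    have hone : ∀ j ∈ List.range' 1 N, 1 ≤ j := fun j hj => (List.mem_range'_1.mp hj).1
    set Z := rfold s' rk (List.range' 1 N) Y₀ with hZdef
    have hZpres := rfold_pres hrk (List.range' 1 N) Y₀ hY₀anti hY₀s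
    have hblock0 : rfold Set.univ rk (List.range' 0 (N + 1)) A = Z ∪ {p} := by
      have : List.range' 0 (N + 1) = 0 :: List.range' 1 N := rfl
      rw [this, rfold_cons, hins]
      exact inner1 hrk hp _ Y₀ hone hY₀anti hY₀s
    have hblocks : bfold Set.univ rk N (List.range' 1 N) (Z ∪ {p}) =
        bfold s' rk N (List.range' 1 N) Z ∪ {p} := by
      refine outer1 hrk hp _ Z ?_ hZpres.1 hZpres.2
      exact fun k hk => (List.mem_range'_1.mp hk).1
    have hPside : bfold s' rk N (List.range (N + 1)) A =
        bfold s' rk N (List.range' 1 N) Z := by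
      rw [hrange, bfold_cons]
      rfl
    have hmain : rvacOn Set.univ rk N A = rvacOn s' rk N A ∪ {p} := by
      rw [rvacOn_eq_bfold, rvacOn_eq_bfold, hrange, bfold_cons]
      have h0 : N + 1 - 0 = N + 1 := rfl
      rw [h0, hblock0, hblocks, ← hPside, ← hrange]
    rw [hmain, bridge hNp hNpN A, Finset.union_comm, ← Finset.insert_eq]
  · -- Case 2
    intro hpA
    set D := A.erase p with hDdef
    have hD : IsAntichain (· ≤ ·) (↑D : Set α) := by
      refine hA.subset ?_
      intro z hz
      exact Finset.mem_coe.mpr (Finset.mem_of_mem_erase (Finset.mem_coe.mp hz))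
    have hDs : ∀ y ∈ D, ¬ p ≤ y := by
      intro y hy
      have hyne : y ≠ p := Finset.ne_of_mem_erase hy
      have hyA : y ∈ A := Finset.mem_of_mem_erase hy
      exact hA (Finset.mem_coe.mpr hpA) (Finset.mem_coe.mpr hyA) (Ne.symm hyne)
    have hDup : D ∪ {p} = A := by
      rw [Finset.union_comm, ← Finset.insert_eq, hDdef, Finset.insert_erase hpA]
    have hmain : bfold Set.univ rk N (List.range' 0 (N + 1)) (D ∪ {p}) =
        bfold s' rk N (List.range' 0 (N + 1)) D := by
      refine outer2 hrk hp hN (N + 1) 0 (by omega) D {p} hD hDs ?_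
        (singleton_antichain p) ?_ ?_
      · intro b hb
        rw [Finset.mem_singleton] at hb
        rw [hb]
        exact ⟨le_refl p, hp0⟩
      · intro y hy b hb
        rw [Finset.mem_singleton] at hb
        rw [hb]
        constructor
        · intro hyb
          have hyne : y ≠ p := Finset.ne_of_mem_erase hy
          exact hp y (lt_of_le_of_ne hyb hyne)
        · exact hDs y hy
      · intro f hpf hrf hfB
        rw [Finset.mem_singleton] at hfB
        have := rk_lt_of_lt hrk f p (lt_of_le_of_ne hpf (Ne.symm hfB))
        omega
    rw [rvacOn_eq_bfold, ← hDup]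
    rw [List.range_eq_range', hmain, ← List.range_eq_range', ← rvacOn_eq_bfold]
    exact bridge hNp hNpN D
end
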